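/- arXiv:1002.0205 — 4 statements merged into one kernel-verified Lean document; each statement's English description precedes it below -/
import Mathlib

section
/- Let E be a number field and let F/E and K/E be two cyclic (finite Galois with cyclic Galois group) extensions inside a common algebraic closure, of degrees n₁ and n₂ respectively, with gcd(n₁, n₂) = 1. If γ ∈ E* is a non-norm element of both F/E and K/E, then the compositum FK/E is a cyclic extension of degree n₁n₂ and γ is a non-norm element of FK/E. -/
set_option maxHeartbeats 1000000

open NumberField IntermediateField

noncomputable def normSubgroup (E F : Type*) [Field E] [Field F] [Algebra E F] : Subgroup Eˣ :=
  MonoidHom.range (Units.map (Algebra.norm E : F →* E))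

/-- `γ ∈ E*` is a non-norm element of `F/E` if its order in `Eˣ/N_{F/E}(Fˣ)` equals `[F:E]`. -/
noncomputable def IsNonNormElement (E F : Type*) [Field E] [Field F] [Algebra E F] (γ : E) : Prop :=
  ∃ hγ : γ ≠ 0,
    orderOf (QuotientGroup.mk (s := normSubgroup E F) (Units.mk0 γ hγ)) = Module.finrank E F

lemma normSubgroup_le_of_le {E Ω : Type*} [Field E] [CharZero E] [Field Ω] [Algebra E Ω]
    (F L : IntermediateField E Ω) (h : F ≤ L) [FiniteDimensional E ↥L] :
    normSubgroup E ↥L ≤ normSubgroup E ↥F := by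
  letI : Algebra ↥F ↥L := (IntermediateField.inclusion h).toAlgebra
  haveI : IsScalarTower E ↥F ↥L := IsScalarTower.of_algebraMap_eq fun x => rfl
  rintro x ⟨u, rfl⟩
  refine ⟨Units.map (Algebra.norm (↥F) : ↥L →* ↥F) u, ?_⟩
  ext
  simpa using Algebra.norm_norm (R := E) (S := ↥F) (a := (u : ↥L))

theorem statement0 {E Ω : Type*} [Field E] [NumberField E] [Field Ω] [Algebra E Ω]
    [IsAlgClosure E Ω]
    (F K : IntermediateField E Ω) (n₁ n₂ : ℕ)
    [FiniteDimensional E ↥F] [IsGalois E ↥F] (hFcyc : IsCyclic (↥F ≃ₐ[E] ↥F))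
    (hFdeg : Module.finrank E ↥F = n₁)
    [FiniteDimensional E ↥K] [IsGalois E ↥K] (hKcyc : IsCyclic (↥K ≃ₐ[E] ↥K))
    (hKdeg : Module.finrank E ↥K = n₂)
    (hcop : Nat.gcd n₁ n₂ = 1)
    (γ : E) (hγF : IsNonNormElement E ↥F γ) (hγK : IsNonNormElement E ↥K γ) :
    IsGalois E ↥(F ⊔ K) ∧ IsCyclic (↥(F ⊔ K) ≃ₐ[E] ↥(F ⊔ K)) ∧
      Module.finrank E ↥(F ⊔ K) = n₁ * n₂ ∧ IsNonNormElement E ↥(F ⊔ K) γ := by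
  haveI hFD : FiniteDimensional E ↥(F ⊔ K) := IntermediateField.finiteDimensional_sup F K
  haveI hGal : IsGalois E ↥(F ⊔ K) := ⟨⟩
  -- degree
  have hdisj : F.LinearDisjoint ↥K :=
    IntermediateField.LinearDisjoint.of_finrank_coprime (by rw [hFdeg, hKdeg]; exact hcop)
  have hdeg : Module.finrank E ↥(F ⊔ K) = n₁ * n₂ := by
    rw [hdisj.finrank_sup, hFdeg, hKdeg]
  -- cyclic
  set L := F ⊔ K with hLdef
  let F₁ : IntermediateField E ↥L := restrict (le_sup_left : F ≤ L)
  let K₁ : IntermediateField E ↥L := restrict (le_sup_right : K ≤ L)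
  let eF : ↥F ≃ₐ[E] ↥F₁ := restrict_algEquiv (le_sup_left : F ≤ L)
  let eK : ↥K ≃ₐ[E] ↥K₁ := restrict_algEquiv (le_sup_right : K ≤ L)
  haveI : Normal E ↥F₁ := Normal.of_algEquiv eF
  haveI : Normal E ↥K₁ := Normal.of_algEquiv eK
  have hsup : F₁ ⊔ K₁ = ⊤ := by
    apply lift_injective
    rw [show lift (F₁ ⊔ K₁) = lift F₁ ⊔ lift K₁ from map_sup _ _ _,
      lift_restrict, lift_restrict, lift_top]
  let φ : (↥L ≃ₐ[E] ↥L) →* (↥F₁ ≃ₐ[E] ↥F₁) × (↥K₁ ≃ₐ[E] ↥K₁) :=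
    (AlgEquiv.restrictNormalHom (↥F₁)).prod (AlgEquiv.restrictNormalHom (↥K₁))
  have hker : ∀ σ : (↥L ≃ₐ[E] ↥L), φ σ = 1 → σ = 1 := by
    intro σ hσ
    have h1 : σ ∈ F₁.fixingSubgroup := by
      rw [← IntermediateField.restrictNormalHom_ker]
      exact congrArg Prod.fst hσ
    have h2 : σ ∈ K₁.fixingSubgroup := by
      rw [← IntermediateField.restrictNormalHom_ker]
      exact congrArg Prod.snd hσ
    have hH : F₁ ⊔ K₁ ≤ IntermediateField.fixedField
        (F₁.fixingSubgroup ⊓ K₁.fixingSubgroup) :=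
      sup_le ((IntermediateField.le_iff_le _ _).mpr inf_le_left)
        ((IntermediateField.le_iff_le _ _).mpr inf_le_right)
    refine AlgEquiv.ext fun x => ?_
    have hx : x ∈ IntermediateField.fixedField (F₁.fixingSubgroup ⊓ K₁.fixingSubgroup) := by
      apply hH; rw [hsup]; trivial
    exact hx ⟨σ, h1, h2⟩
  have hinj : Function.Injective φ := by
    rw [← MonoidHom.ker_eq_bot_iff, eq_bot_iff]
    intro σ hσ
    exact hker σ hσ
  haveI : IsCyclic ((↥F₁ ≃ₐ[E] ↥F₁) × (↥K₁ ≃ₐ[E] ↥K₁)) := by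
    haveI := hFcyc; haveI := hKcyc
    obtain ⟨a, ha⟩ := IsCyclic.exists_ofOrder_eq_natCard (α := ↥F ≃ₐ[E] ↥F)
    obtain ⟨b, hb⟩ := IsCyclic.exists_ofOrder_eq_natCard (α := ↥K ≃ₐ[E] ↥K)
    have hcF : Nat.card (↥F ≃ₐ[E] ↥F) = n₁ := by
      rw [IsGalois.card_aut_eq_finrank, hFdeg]
    have hcK : Nat.card (↥K ≃ₐ[E] ↥K) = n₂ := by
      rw [IsGalois.card_aut_eq_finrank, hKdeg]
    apply isCyclic_of_orderOf_eq_card ((AlgEquiv.autCongr eF) a, (AlgEquiv.autCongr eK) b)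
    rw [Prod.orderOf_mk, MulEquiv.orderOf_eq, MulEquiv.orderOf_eq, ha, hb,
      Nat.card_prod, Nat.card_congr (AlgEquiv.autCongr eF).toEquiv.symm,
      Nat.card_congr (AlgEquiv.autCongr eK).toEquiv.symm, hcF, hcK]
    exact Nat.Coprime.lcm_eq_mul hcop
  haveI : IsCyclic φ.range := Subgroup.isCyclic _
  have hcyc : IsCyclic (↥L ≃ₐ[E] ↥L) :=
    isCyclic_of_surjective (MonoidHom.ofInjective hinj).symm (MulEquiv.surjective _)
  refine ⟨hGal, hcyc, hdeg, ?_⟩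
  obtain ⟨hγ, hordF⟩ := hγF
  obtain ⟨hγ', hordK⟩ := hγK
  refine ⟨hγ, ?_⟩
  rw [hdeg]
  have hpow : (Units.mk0 γ hγ) ^ (n₁ * n₂) ∈ normSubgroup E ↥L := by
    refine ⟨Units.mk0 (algebraMap E ↥L γ) (by simpa using hγ), ?_⟩
    ext
    show Algebra.norm E ((algebraMap E ↥L) γ) = ((Units.mk0 γ hγ) ^ (n₁ * n₂) : Eˣ).val
    rw [Algebra.norm_algebraMap, hdeg, Units.val_pow_eq_pow_val, Units.val_mk0]
  have hdvd : orderOf (QuotientGroup.mk (s := normSubgroup E ↥L) (Units.mk0 γ hγ)) ∣ n₁ * n₂ := by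
    apply orderOf_dvd_of_pow_eq_one
    rw [← QuotientGroup.mk_pow]
    exact (QuotientGroup.eq_one_iff _).2 hpow
  have hd1 : n₁ ∣ orderOf (QuotientGroup.mk (s := normSubgroup E ↥L) (Units.mk0 γ hγ)) := by
    have hle : normSubgroup E ↥L ≤ normSubgroup E ↥F := normSubgroup_le_of_le F L le_sup_left
    have hmap := orderOf_map_dvd (QuotientGroup.map (normSubgroup E ↥L) (normSubgroup E ↥F)
      (MonoidHom.id Eˣ) (fun x hx => hle hx)) (QuotientGroup.mk (Units.mk0 γ hγ))
    change orderOf (QuotientGroup.mk (s := normSubgroup E ↥F) (Units.mk0 γ hγ)) ∣ _ at hmap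
    rw [← hFdeg, ← hordF]
    exact hmap
  have hd2 : n₂ ∣ orderOf (QuotientGroup.mk (s := normSubgroup E ↥L) (Units.mk0 γ hγ)) := by
    have hle : normSubgroup E ↥L ≤ normSubgroup E ↥K := normSubgroup_le_of_le K L le_sup_right
    have hmap := orderOf_map_dvd (QuotientGroup.map (normSubgroup E ↥L) (normSubgroup E ↥K)
      (MonoidHom.id Eˣ) (fun x hx => hle hx)) (QuotientGroup.mk (Units.mk0 γ hγ))
    change orderOf (QuotientGroup.mk (s := normSubgroup E ↥K) (Units.mk0 γ hγ)) ∣ _ at hmap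
    rw [← hKdeg, ← hordK]
    exact hmap
  exact Nat.dvd_antisymm hdvd (Nat.Coprime.mul_dvd_of_dvd_of_dvd hcop hd1 hd2)
end

section
/- Let q be a prime number, k a positive integer, and F/E a cyclic extension of number fields of degree q^k. Let 𝔭 be a nonzero prime ideal of the ring of integers O_E that is totally and tamely ramified in F/E. If γ ∈ O_E \ 𝔭 and the congruence x^q ≡ γ (mod 𝔭) has no solution x ∈ O_E, then γ is a non-norm element of F/E. -/
set_option maxHeartbeats 2000000
set_option synthInstance.maxHeartbeats 400000

open NumberField IntermediateField

section Aux

open UniqueFactorizationMonoid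

variable {S : Type*} [CommRing S] [IsDedekindDomain S]

open scoped Classical in
/-- multiplicity of the prime `𝔓` in the factorization of the ideal `(x)`. -/
noncomputable def pcnt (𝔓 : Ideal S) (x : S) : ℕ :=
  (Associates.mk 𝔓).count (Associates.mk (Ideal.span {x} : Ideal S)).factors

lemma pcnt_spec {𝔓 : Ideal S} (hP : 𝔓.IsPrime) (hP0 : 𝔓 ≠ ⊥) {x : S} (hx : x ≠ 0) (n : ℕ) :
    x ∈ 𝔓 ^ n ↔ n ≤ pcnt 𝔓 x := by
  have h := IsDedekindDomain.HeightOneSpectrum.intValuation_le_pow_iff_dvd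
    (⟨𝔓, hP, hP0⟩ : IsDedekindDomain.HeightOneSpectrum S) x n
  rw [Ideal.dvd_span_singleton] at h
  rw [IsDedekindDomain.HeightOneSpectrum.intValuation_if_neg _ hx] at h
  rw [← h, WithZero.exp_le_exp, neg_le_neg_iff, Nat.cast_le]
  unfold pcnt
  congr!

lemma pcnt_mul {𝔓 : Ideal S} (hP : 𝔓.IsPrime) (hP0 : 𝔓 ≠ ⊥) {x y : S} (hx : x ≠ 0) (hy : y ≠ 0) :
    pcnt 𝔓 (x * y) = pcnt 𝔓 x + pcnt 𝔓 y := by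
  have h := IsDedekindDomain.HeightOneSpectrum.intValuation.map_mul'
    (⟨𝔓, hP, hP0⟩ : IsDedekindDomain.HeightOneSpectrum S) x y
  rw [IsDedekindDomain.HeightOneSpectrum.intValuationDef_if_neg _ (mul_ne_zero hx hy),
    IsDedekindDomain.HeightOneSpectrum.intValuationDef_if_neg _ hx,
    IsDedekindDomain.HeightOneSpectrum.intValuationDef_if_neg _ hy,
    ← WithZero.exp_add, WithZero.exp_inj] at h
  have h2 := h
  have hasId : (({ asIdeal := 𝔓, isPrime := hP, ne_bot := hP0 } :
      IsDedekindDomain.HeightOneSpectrum S)).asIdeal = 𝔓 := rfl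
  rw [hasId] at h2
  unfold pcnt
  omega

lemma pcnt_zero_of_not_mem {𝔓 : Ideal S} (hP : 𝔓.IsPrime) (hP0 : 𝔓 ≠ ⊥) {x : S}
    (hx : x ≠ 0) (hmem : x ∉ 𝔓) : pcnt 𝔓 x = 0 := by
  by_contra h
  exact hmem (by simpa using (pcnt_spec hP hP0 hx 1).mpr (by omega))

lemma pcnt_prod {𝔓 : Ideal S} (hP : 𝔓.IsPrime) (hP0 : 𝔓 ≠ ⊥) {ι : Type*} (u : Finset ι)
    (f : ι → S) (hf : ∀ i ∈ u, f i ≠ 0) :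
    pcnt 𝔓 (∏ i ∈ u, f i) = ∑ i ∈ u, pcnt 𝔓 (f i) := by
  classical
  induction u using Finset.cons_induction with
  | empty =>
    simp only [Finset.prod_empty, Finset.sum_empty]
    exact pcnt_zero_of_not_mem hP hP0 one_ne_zero (fun h => hP.ne_top (Ideal.eq_top_of_isUnit_mem _ h isUnit_one))
  | cons a u ha ih =>
    have h1 : f a ≠ 0 := hf a (Finset.mem_cons_self a u)
    have h2 : ∀ i ∈ u, f i ≠ 0 := fun i hi => hf i (Finset.mem_cons_of_mem hi)
    have h3 : (∏ i ∈ u, f i) ≠ 0 := Finset.prod_ne_zero_iff.mpr h2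
    rw [Finset.prod_cons, Finset.sum_cons, pcnt_mul hP hP0 h1 h3, ih h2]

lemma perep {𝔓 : Ideal S} (hP : 𝔓.IsPrime) (hP0 : 𝔓 ≠ ⊥) {s t : S} (hs : s ≠ 0) (ht : t ≠ 0)
    (hst : pcnt 𝔓 t ≤ pcnt 𝔓 s) : ∃ x s' : S, x ∉ 𝔓 ∧ x * s = t * s' := by
  classical
  haveI := hP.isMaximal hP0
  obtain ⟨B, hcop, heq⟩ := Ideal.eq_prime_pow_mul_coprime (I := Ideal.span {t})
      (by simpa [Ne, Ideal.span_singleton_eq_bot] using ht) 𝔓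
  set c := Multiset.count 𝔓 (normalizedFactors (Ideal.span {t} : Ideal S)) with hc
  have htc : t ∈ 𝔓 ^ c := by
    have hle : Ideal.span {t} ≤ 𝔓 ^ c := by
      rw [heq]; exact Ideal.mul_le_left
    exact hle (Ideal.mem_span_singleton_self t)
  have hcle : c ≤ pcnt 𝔓 t := (pcnt_spec hP hP0 ht c).mp htc
  have hsc : s ∈ 𝔓 ^ c := (pcnt_spec hP hP0 hs c).mpr (le_trans hcle hst)
  have hBP : ¬ B ≤ 𝔓 := by
    intro hle
    exact hP.ne_top (top_le_iff.mp (le_of_eq_of_le hcop.symm (sup_le le_rfl hle)))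
  obtain ⟨x, hxB, hxP⟩ := SetLike.not_le_iff_exists.mp hBP
  have hmem : x * s ∈ Ideal.span {t} := by
    rw [heq]
    have hcomm : x * s = s * x := mul_comm x s
    rw [hcomm]
    exact Ideal.mul_mem_mul hsc hxB
  obtain ⟨s', hs'⟩ := Ideal.mem_span_singleton'.mp hmem
  exact ⟨x, s', hxP, by rw [← hs']; ring⟩

/-- Group-theoretic step in a finite cyclic group. -/
lemma cyc_aux {M : Type*} [CommGroup M] [Finite M] [IsCyclic M] {q k : ℕ} (hq : q.Prime)
    (hk : 0 < k) (hdvd : q ^ k ∣ Nat.card M) (α β : M) (h : α ^ q ^ (k - 1) = β ^ q ^ k) :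
    ∃ c : M, α = c ^ q := by
  obtain ⟨g, hg⟩ := IsCyclic.exists_generator (α := M)
  set z := α * (β ^ q)⁻¹ with hz
  have hzpow : z ^ q ^ (k - 1) = 1 := by
    have hqq : q * q ^ (k - 1) = q ^ k := by
      rw [← pow_succ']
      congr 1
      omega
    rw [hz, mul_pow, inv_pow, ← pow_mul, hqq, h, mul_inv_cancel]
  obtain ⟨i, hi⟩ : z ∈ Submonoid.powers g := by
    rw [mem_powers_iff_mem_zpowers]; exact hg z
  have hi' : g ^ i = z := hi
  have hordg : orderOf g = Nat.card M := orderOf_eq_card_of_forall_mem_zpowers hg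
  have hdvd2 : Nat.card M ∣ i * q ^ (k - 1) := by
    rw [← hordg]
    apply orderOf_dvd_of_pow_eq_one
    rw [pow_mul, hi', hzpow]
  have hdvd3 : q ^ k ∣ i * q ^ (k - 1) := dvd_trans hdvd hdvd2
  obtain ⟨d, hd⟩ := hdvd3
  have hqd : i = q * d := by
    have hqq : q ^ k = q ^ (k - 1) * q := by rw [← pow_succ]; congr 1; omega
    rw [hqq] at hd
    have hne : q ^ (k - 1) ≠ 0 := pow_ne_zero _ hq.ne_zero
    have : i * q ^ (k - 1) = (q * d) * q ^ (k - 1) := by rw [hd]; ring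
    exact Nat.eq_of_mul_eq_mul_right (Nat.pos_of_ne_zero hne) this
  refine ⟨g ^ d * β, ?_⟩
  have hzeq : z = (g ^ d) ^ q := by
    rw [← hi', hqd, ← pow_mul, mul_comm q d]
  have : α = z * β ^ q := by rw [hz]; group
  rw [this, hzeq, mul_pow]

end Aux

theorem statement1 {E F : Type*} [Field E] [NumberField E] [Field F] [NumberField F]
    [Algebra E F] [FiniteDimensional E F] [IsGalois E F] (hcyc : IsCyclic (F ≃ₐ[E] F))
    (q k : ℕ) (hq : q.Prime) (hk : 0 < k)
    (hdeg : Module.finrank E F = q ^ k)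
    (𝔭 : Ideal (𝓞 E)) (h𝔭prime : 𝔭.IsPrime) (h𝔭ne : 𝔭 ≠ ⊥)
    -- 𝔭 is totally ramified in F/E:
    (𝔓 : Ideal (𝓞 F)) (h𝔓prime : 𝔓.IsPrime)
    (h𝔓over : Ideal.comap (algebraMap (𝓞 E) (𝓞 F)) 𝔓 = 𝔭)
    (hram : Ideal.ramificationIdx' 𝔭 𝔓 = Module.finrank E F)
    -- and tamely: the residue characteristic does not divide the degree:
    (htame : ¬ ringChar ((𝓞 E) ⧸ 𝔭) ∣ Module.finrank E F)
    (γ : 𝓞 E) (hγ : γ ∉ 𝔭)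
    (hsol : ¬ ∃ x : 𝓞 E, x ^ q - γ ∈ 𝔭) :
    IsNonNormElement E F (algebraMap (𝓞 E) E γ) := by
  classical
  have hinj : Function.Injective (algebraMap (𝓞 E) E) := IsFractionRing.injective _ _
  have hinjS : Function.Injective (algebraMap (𝓞 F) F) := IsFractionRing.injective _ _
  have hinjRS : Function.Injective (algebraMap (𝓞 E) (𝓞 F)) :=
    FaithfulSMul.algebraMap_injective _ _
  have hγ0 : γ ≠ 0 := fun h => hγ (h ▸ 𝔭.zero_mem)
  have hγE0 : algebraMap (𝓞 E) E γ ≠ 0 := fun h => hγ0 (hinj (by simpa using h))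
  refine ⟨hγE0, ?_⟩
  have hq0 : q ≠ 0 := hq.ne_zero
  have hn0 : q ^ k ≠ 0 := pow_ne_zero _ hq0
  have hP0 : 𝔓 ≠ ⊥ := by
    rintro rfl
    exact h𝔭ne (by simpa [Ideal.comap_bot_of_injective _ hinjRS] using h𝔓over.symm)
  haveI h𝔭max : 𝔭.IsMaximal := h𝔭prime.isMaximal h𝔭ne
  haveI h𝔓max : 𝔓.IsMaximal := h𝔓prime.isMaximal hP0
  haveI : 𝔓.LiesOver 𝔭 := ⟨h𝔓over.symm⟩
  -- the Galois action on the ring of integers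
  set ρ : (F ≃ₐ[E] F) → ((𝓞 F) ≃ₐ[𝓞 E] (𝓞 F)) := fun σ => galRestrict (𝓞 E) E F (𝓞 F) σ
    with hρdef
  have hcardG : Fintype.card (F ≃ₐ[E] F) = q ^ k := by
    rw [← Nat.card_eq_fintype_card, IsGalois.card_aut_eq_finrank, hdeg]
  -- membership of 𝔓 in the factors of 𝔭
  have hmapne : Ideal.map (algebraMap (𝓞 E) (𝓞 F)) 𝔭 ≠ ⊥ :=
    fun h => h𝔭ne ((Ideal.map_eq_bot_iff_of_injective hinjRS).mp h)
  have hmaple : Ideal.map (algebraMap (𝓞 E) (𝓞 F)) 𝔭 ≤ 𝔓 :=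
    Ideal.map_le_iff_le_comap.mpr (le_of_eq h𝔓over.symm)
  set T := (UniqueFactorizationMonoid.factors (Ideal.map (algebraMap (𝓞 E) (𝓞 F)) 𝔭)).toFinset
    with hT
  have hmemT : ∀ Q : Ideal (𝓞 F), Q.IsPrime → Ideal.map (algebraMap (𝓞 E) (𝓞 F)) 𝔭 ≤ Q → Q ∈ T := by
    intro Q hQp hle
    rw [hT, Multiset.mem_toFinset, UniqueFactorizationMonoid.factors_eq_normalizedFactors,
      Ideal.mem_normalizedFactors_iff hmapne]
    exact ⟨hQp, hle⟩
  have hmem𝔓 : 𝔓 ∈ T := hmemT 𝔓 h𝔓prime hmaple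
  have hsum := Ideal.sum_ramification_inertia (p := 𝔭) (S := 𝓞 F) E F h𝔭ne
  set e := Ideal.ramificationIdx' (S := 𝓞 F) 𝔭 with he
  set f := Ideal.inertiaDeg' (S := 𝓞 F) 𝔭 with hf
  have hterm : e 𝔓 * f 𝔓 ≤ Module.finrank E F := by
    rw [← hsum]
    exact Finset.single_le_sum (f := fun P => e P * f P) (fun i _ => Nat.zero_le _) hmem𝔓
  have hfpos : 0 < f 𝔓 := Ideal.inertiaDeg'_pos 𝔭 𝔓
  have hfr0 : 0 < Module.finrank E F := Module.finrank_pos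
  have hf1 : f 𝔓 = 1 := by
    rw [hram] at hterm
    nlinarith
  -- uniqueness of the prime above 𝔭
  have huniq : ∀ Q : Ideal (𝓞 F), Q.IsPrime →
      Ideal.comap (algebraMap (𝓞 E) (𝓞 F)) Q = 𝔭 → Q = 𝔓 := by
    intro Q hQp hQover
    by_contra hne
    haveI : Q.LiesOver 𝔭 := ⟨hQover.symm⟩
    have hmemQ : Q ∈ T := hmemT Q hQp (Ideal.map_le_iff_le_comap.mpr (le_of_eq hQover.symm))
    have hQe : e Q ≠ 0 := Ideal.IsDedekindDomain.ramificationIdx_ne_zero hmapne hQp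
      (Ideal.map_le_iff_le_comap.mpr (le_of_eq hQover.symm))
    have hQf : 0 < f Q := Ideal.inertiaDeg'_pos 𝔭 Q
    have h1 : e Q * f Q ≤ ∑ P ∈ T.erase 𝔓, e P * f P :=
      Finset.single_le_sum (f := fun P => e P * f P) (fun i _ => Nat.zero_le _)
        (Finset.mem_erase.mpr ⟨hne, hmemQ⟩)
    have h2 : e 𝔓 * f 𝔓 + ∑ P ∈ T.erase 𝔓, e P * f P = ∑ P ∈ T, e P * f P :=
      Finset.add_sum_erase T (f := fun P => e P * f P) hmem𝔓
    rw [hsum] at h2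
    have h3 : 0 < e Q * f Q := Nat.mul_pos (Nat.pos_of_ne_zero hQe) hQf
    rw [hf1, mul_one, hram] at h2
    omega
  -- surjectivity of the residue map from 𝓞 E
  letI : Field ((𝓞 F) ⧸ 𝔓) := Ideal.Quotient.field 𝔓
  have hfrank : Module.finrank ((𝓞 E) ⧸ 𝔭) ((𝓞 F) ⧸ 𝔓) = 1 := by
    rw [← Ideal.inertiaDeg_algebraMap 𝔭 𝔓]
    exact hf1
  have hcompat : ∀ r : 𝓞 E, algebraMap ((𝓞 E) ⧸ 𝔭) ((𝓞 F) ⧸ 𝔓) (Ideal.Quotient.mk 𝔭 r)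
      = Ideal.Quotient.mk 𝔓 (algebraMap (𝓞 E) (𝓞 F) r) := fun r => rfl
  letI : Field ((𝓞 E) ⧸ 𝔭) := Ideal.Quotient.field 𝔭
  have hsurj : Function.Surjective
      (fun r : 𝓞 E => Ideal.Quotient.mk 𝔓 (algebraMap (𝓞 E) (𝓞 F) r)) := by
    intro z
    have hbt : (⊥ : Subalgebra ((𝓞 E) ⧸ 𝔭) ((𝓞 F) ⧸ 𝔓)) = ⊤ :=
      Subalgebra.bot_eq_top_of_finrank_eq_one hfrank
    have hz : z ∈ (⊥ : Subalgebra ((𝓞 E) ⧸ 𝔭) ((𝓞 F) ⧸ 𝔓)) := by rw [hbt]; trivial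
    obtain ⟨w, hw⟩ := Algebra.mem_bot.mp hz
    obtain ⟨r, rfl⟩ := Ideal.Quotient.mk_surjective w
    refine ⟨r, ?_⟩
    show Ideal.Quotient.mk 𝔓 (algebraMap (𝓞 E) (𝓞 F) r) = z
    rw [← hcompat r]
    exact hw
  -- stability of 𝔓 under the Galois action
  have hinvρ : ∀ (σ : F ≃ₐ[E] F) (x : 𝓞 F), ρ σ⁻¹ (ρ σ x) = x := by
    intro σ x
    have h1 : ρ σ⁻¹ * ρ σ = 1 := by
      rw [hρdef]
      rw [← map_mul (galRestrict (𝓞 E) E F (𝓞 F)), inv_mul_cancel, map_one]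
    calc ρ σ⁻¹ (ρ σ x) = (ρ σ⁻¹ * ρ σ) x := rfl
      _ = x := by rw [h1]; rfl
  have hcomap : ∀ σ : F ≃ₐ[E] F, Ideal.comap (ρ σ) 𝔓 = 𝔓 := by
    intro σ
    apply huniq
    · exact h𝔓prime.comap _
    · ext r
      simp only [Ideal.mem_comap, AlgEquiv.commutes]
      rw [← h𝔓over, Ideal.mem_comap]
  have hmapP : ∀ σ : F ≃ₐ[E] F, Ideal.map (ρ σ) 𝔓 = 𝔓 := by
    intro σ
    apply le_antisymm
    · rw [Ideal.map_le_iff_le_comap, hcomap σ]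
    · intro y hy
      have hx : ρ σ⁻¹ y ∈ 𝔓 := by
        have : y ∈ Ideal.comap (ρ σ⁻¹) 𝔓 := by rw [hcomap σ⁻¹]; exact hy
        exact Ideal.mem_comap.mp this
      have : ρ σ (ρ σ⁻¹ y) ∈ Ideal.map (ρ σ) 𝔓 := Ideal.mem_map_of_mem _ hx
      rwa [show ρ σ (ρ σ⁻¹ y) = y from by
        have := hinvρ σ⁻¹ y
        rwa [inv_inv] at this] at this
  have hstab : ∀ (σ : F ≃ₐ[E] F) (i : ℕ) (x : 𝓞 F), x ∈ 𝔓 ^ i → ρ σ x ∈ 𝔓 ^ i := by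
    intro σ i x hx
    have : ρ σ x ∈ Ideal.map (ρ σ) (𝔓 ^ i) := Ideal.mem_map_of_mem _ hx
    rwa [Ideal.map_pow, hmapP σ] at this
  have hstab' : ∀ (σ : F ≃ₐ[E] F) (i : ℕ) (x : 𝓞 F), ρ σ x ∈ 𝔓 ^ i → x ∈ 𝔓 ^ i := by
    intro σ i x hx
    have h2 := hstab σ⁻¹ i _ hx
    rwa [hinvρ σ x] at h2
  -- the Galois action is trivial on the residue field
  have hresid : ∀ (σ : F ≃ₐ[E] F) (x : 𝓞 F), ρ σ x - x ∈ 𝔓 := by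
    intro σ x
    obtain ⟨r, hr⟩ := hsurj (Ideal.Quotient.mk 𝔓 x)
    have h1 : algebraMap (𝓞 E) (𝓞 F) r - x ∈ 𝔓 := Ideal.Quotient.eq.mp hr
    have hid : ρ σ x - x = (algebraMap (𝓞 E) (𝓞 F) r - x)
        - ρ σ (algebraMap (𝓞 E) (𝓞 F) r - x) := by
      rw [map_sub, AlgEquiv.commutes]
      ring
    rw [hid]
    refine Submodule.sub_mem _ h1 ?_
    have h2 := hstab σ 1 (algebraMap (𝓞 E) (𝓞 F) r - x) (by rwa [pow_one])
    rwa [pow_one] at h2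
  -- the integral norm
  set NN : (𝓞 F) → (𝓞 E) := fun z => IsIntegralClosure.mk' (𝓞 E)
      (Algebra.norm E (algebraMap (𝓞 F) F z))
      (Algebra.isIntegral_norm E (IsIntegralClosure.isIntegral (𝓞 E) F z).algebraMap)
    with hNNdef
  have hNNalg : ∀ z : 𝓞 F, algebraMap (𝓞 E) E (NN z) = Algebra.norm E (algebraMap (𝓞 F) F z) :=
    fun z => IsIntegralClosure.algebraMap_mk' _ _ _
  have hNNprod : ∀ z : 𝓞 F,
      algebraMap (𝓞 E) (𝓞 F) (NN z) = ∏ σ : F ≃ₐ[E] F, ρ σ z :=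
    fun z => (prod_galRestrict_eq_norm (𝓞 E) E F (𝓞 F) z).symm
  have hnormres : ∀ z : 𝓞 F, Ideal.Quotient.mk 𝔓 (algebraMap (𝓞 E) (𝓞 F) (NN z))
      = (Ideal.Quotient.mk 𝔓 z) ^ (q ^ k) := by
    intro z
    rw [hNNprod, map_prod]
    have hc : ∀ σ : F ≃ₐ[E] F, Ideal.Quotient.mk 𝔓 (ρ σ z) = Ideal.Quotient.mk 𝔓 z :=
      fun σ => Ideal.Quotient.eq.mpr (hresid σ z)
    simp only [hc]
    rw [Finset.prod_const, Finset.card_univ, hcardG]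
  have hpcnt_inv : ∀ (σ : F ≃ₐ[E] F) (z : 𝓞 F), z ≠ 0 → pcnt 𝔓 (ρ σ z) = pcnt 𝔓 z := by
    intro σ z hz
    have hz' : ρ σ z ≠ 0 := fun h => hz ((map_eq_zero_iff _ (ρ σ).injective).mp h)
    apply le_antisymm
    · exact (pcnt_spec h𝔓prime hP0 hz _).mp
        (hstab' σ _ z ((pcnt_spec h𝔓prime hP0 hz' _).mpr le_rfl))
    · exact (pcnt_spec h𝔓prime hP0 hz' _).mp
        (hstab σ _ z ((pcnt_spec h𝔓prime hP0 hz _).mpr le_rfl))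
  have hpcnt_norm : ∀ z : 𝓞 F, z ≠ 0 →
      pcnt 𝔓 (algebraMap (𝓞 E) (𝓞 F) (NN z)) = q ^ k * pcnt 𝔓 z := by
    intro z hz
    rw [hNNprod]
    rw [pcnt_prod h𝔓prime hP0 _ _
      (fun σ _ => fun h => hz ((map_eq_zero_iff _ (ρ σ).injective).mp h))]
    rw [Finset.sum_congr rfl (fun σ _ => hpcnt_inv σ z hz), Finset.sum_const, Finset.card_univ,
      hcardG, smul_eq_mul]
  have hγS : algebraMap (𝓞 E) (𝓞 F) γ ∉ 𝔓 := by
    intro h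
    exact hγ (by rw [← h𝔓over]; exact Ideal.mem_comap.mpr h)
  have hγS0 : algebraMap (𝓞 E) (𝓞 F) γ ≠ 0 := fun h => hγ0 (hinjRS (by simpa using h))
  -- finiteness of residue field
  haveI : Fintype ((𝓞 F) ⧸ 𝔓) := @Fintype.ofFinite _ (Ideal.finiteQuotientOfFreeOfNeBot 𝔓 hP0)
  -- THE KEY DIVISIBILITY: q ^ k divides the cardinality of the units of the residue field
  have hdvdL : q ^ k ∣ Nat.card ((𝓞 F) ⧸ 𝔓)ˣ := by
    -- a uniformizer π of 𝔓
    have hP2ne : 𝔓 ^ 2 ≠ 𝔓 := by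
      intro h
      have h1 : 𝔓 * 𝔓 = 𝔓 * 1 := by rw [mul_one, ← pow_two, h]
      have h2 : 𝔓 = 1 := mul_left_cancel₀ (by simpa [Ideal.zero_eq_bot] using hP0) h1
      exact h𝔓prime.ne_top (by rwa [Ideal.one_eq_top] at h2)
    have hlt : 𝔓 ^ 2 < 𝔓 := lt_of_le_of_ne (Ideal.pow_le_self two_ne_zero) hP2ne
    obtain ⟨π, hπ𝔓, hπ2⟩ := SetLike.exists_of_lt hlt
    have hπ0 : π ≠ 0 := fun h => hπ2 (h ▸ Submodule.zero_mem _)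
    have hJ : Ideal.span {π} ⊔ 𝔓 ^ 2 = 𝔓 := by
      have hle : Ideal.span {π} ⊔ 𝔓 ^ 2 ≤ 𝔓 :=
        sup_le ((Ideal.span_singleton_le_iff_mem _).mpr hπ𝔓) (Ideal.pow_le_self two_ne_zero)
      have hdvd : (Ideal.span {π} ⊔ 𝔓 ^ 2) ∣ 𝔓 ^ 2 := Ideal.dvd_iff_le.mpr le_sup_right
      obtain ⟨i, hi2, hassoc⟩ :=
        (dvd_prime_pow (Ideal.prime_of_isPrime hP0 h𝔓prime) 2).mp hdvd
      have hJeq : Ideal.span {π} ⊔ 𝔓 ^ 2 = 𝔓 ^ i := associated_iff_eq.mp hassoc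
      interval_cases i
      · exfalso
        rw [pow_zero, Ideal.one_eq_top] at hJeq
        rw [hJeq] at hle
        exact h𝔓prime.ne_top (top_le_iff.mp hle)
      · rw [hJeq, pow_one]
      · exfalso
        apply hπ2
        rw [← hJeq]
        exact Ideal.mem_sup_left (Ideal.mem_span_singleton_self π)
    have hPde : ∀ y ∈ 𝔓, ∃ c : 𝓞 F, y - c * π ∈ 𝔓 ^ 2 := by
      intro y hy
      rw [← hJ] at hy
      obtain ⟨a, ha, z, hz, hsum'⟩ := Submodule.mem_sup.mp hy
      obtain ⟨c, hc⟩ := Ideal.mem_span_singleton'.mp ha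
      refine ⟨c, ?_⟩
      have hzc : y - c * π = z := by rw [← hsum', hc]; ring
      rw [hzc]
      exact hz
    have hρπ : ∀ σ : F ≃ₐ[E] F, ρ σ π ∈ 𝔓 := by
      intro σ
      have := hstab σ 1 π (by rwa [pow_one])
      rwa [pow_one] at this
    choose θc hθc using fun σ : F ≃ₐ[E] F => hPde (ρ σ π) (hρπ σ)
    have hπcnt : pcnt 𝔓 π = 1 := by
      have h1 : 1 ≤ pcnt 𝔓 π := (pcnt_spec h𝔓prime hP0 hπ0 1).mp (by rwa [pow_one])
      have h2 : ¬ 2 ≤ pcnt 𝔓 π := fun h => hπ2 ((pcnt_spec h𝔓prime hP0 hπ0 2).mpr h)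
      omega
    have huniqc : ∀ c c' : 𝓞 F, c * π - c' * π ∈ 𝔓 ^ 2 → c - c' ∈ 𝔓 := by
      intro c c' h
      by_cases hcc : c - c' = 0
      · rw [hcc]; exact 𝔓.zero_mem
      · have h' : (c - c') * π ∈ 𝔓 ^ 2 := by rw [sub_mul]; exact h
        have h2 := (pcnt_spec h𝔓prime hP0 (mul_ne_zero hcc hπ0) 2).mp h'
        rw [pcnt_mul h𝔓prime hP0 hcc hπ0, hπcnt] at h2
        have h3 : 1 ≤ pcnt 𝔓 (c - c') := by omega
        have h4 := (pcnt_spec h𝔓prime hP0 hcc 1).mpr h3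
        rwa [pow_one] at h4
    have hθmul : ∀ σ τ : F ≃ₐ[E] F, Ideal.Quotient.mk 𝔓 (θc (σ * τ))
        = Ideal.Quotient.mk 𝔓 (θc σ) * Ideal.Quotient.mk 𝔓 (θc τ) := by
      intro σ τ
      rw [← map_mul, Ideal.Quotient.eq]
      apply huniqc
      have hcomp : ρ (σ * τ) π = ρ σ (ρ τ π) := by
        rw [hρdef]
        simp only [map_mul (galRestrict (𝓞 E) E F (𝓞 F))]
        rfl
      have key : ρ (σ * τ) π - (θc σ * θc τ) * π ∈ 𝔓 ^ 2 := by
        have hid : ρ (σ * τ) π - (θc σ * θc τ) * π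
            = (ρ σ (θc τ) - θc τ) * (θc σ * π) + ρ σ (θc τ) * (ρ σ π - θc σ * π)
              + ρ σ (ρ τ π - θc τ * π) := by
          rw [hcomp, map_sub, map_mul]
          ring
        rw [hid]
        refine Submodule.add_mem _ (Submodule.add_mem _ ?_ ?_) ?_
        · rw [pow_two]
          exact Ideal.mul_mem_mul (hresid σ (θc τ)) (Ideal.mul_mem_left _ _ hπ𝔓)
        · exact Ideal.mul_mem_left _ _ (hθc σ)
        · exact hstab σ 2 _ (hθc τ)
      have hid2 : θc (σ * τ) * π - (θc σ * θc τ) * π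
          = (ρ (σ * τ) π - (θc σ * θc τ) * π) - (ρ (σ * τ) π - θc (σ * τ) * π) := by ring
      rw [hid2]
      exact Submodule.sub_mem _ key (hθc _)
    have hθone : Ideal.Quotient.mk 𝔓 (θc 1) = 1 := by
      have hρ1 : ρ (1 : F ≃ₐ[E] F) π = π := by
        rw [hρdef]
        simp only [map_one (galRestrict (𝓞 E) E F (𝓞 F))]
        rfl
      have h1 : θc 1 * π - 1 * π ∈ 𝔓 ^ 2 := by
        have hid : θc 1 * π - 1 * π = -(ρ (1 : F ≃ₐ[E] F) π - θc 1 * π) := by rw [hρ1]; ring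
        rw [hid]
        exact Submodule.neg_mem _ (hθc 1)
      have h2 := huniqc _ _ h1
      calc Ideal.Quotient.mk 𝔓 (θc 1) = Ideal.Quotient.mk 𝔓 1 := Ideal.Quotient.eq.mpr h2
        _ = 1 := map_one _
    set θ : (F ≃ₐ[E] F) →* ((𝓞 F) ⧸ 𝔓) :=
      { toFun := fun σ => Ideal.Quotient.mk 𝔓 (θc σ), map_one' := hθone, map_mul' := hθmul }
      with hθdef
    have hθinj : Function.Injective θ.toHomUnits := by
      rw [← MonoidHom.ker_eq_bot_iff, Subgroup.eq_bot_iff_forall]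
      intro σ hσ
      by_contra hσ1
      have hσord : orderOf σ ∣ q ^ k := hcardG ▸ orderOf_dvd_card
      obtain ⟨i, hik, hoi⟩ := (Nat.dvd_prime_pow hq).mp hσord
      have hi0 : i ≠ 0 := by
        intro h
        rw [h, pow_zero, orderOf_eq_one_iff] at hoi
        exact hσ1 hoi
      set τ := σ ^ (q ^ (i - 1)) with hτdef
      have hτ1 : τ ≠ 1 := by
        intro h
        have h1 := orderOf_dvd_of_pow_eq_one h
        rw [hoi] at h1
        have hlt : q ^ (i - 1) < q ^ i := Nat.pow_lt_pow_right hq.one_lt (by omega)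
        exact absurd (Nat.le_of_dvd (pow_pos hq.pos _) h1) (not_le.mpr hlt)
      have hτq : τ ^ q = 1 := by
        rw [hτdef, ← pow_mul, ← pow_succ]
        have h1 : i - 1 + 1 = i := by omega
        rw [h1, ← hoi]
        exact pow_orderOf_eq_one σ
      have hτker : τ ∈ θ.toHomUnits.ker := Subgroup.pow_mem _ hσ _
      have hτθ : Ideal.Quotient.mk 𝔓 (θc τ) = 1 := by
        have h1 : θ.toHomUnits τ = 1 := hτker
        have h2 := congrArg Units.val h1
        have h3 : θ τ = 1 := by simpa [MonoidHom.coe_toHomUnits] using h2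
        exact h3
      have hτπ : ρ τ π - π ∈ 𝔓 ^ 2 := by
        have h1 : θc τ - 1 ∈ 𝔓 := by
          rw [← Ideal.Quotient.eq_zero_iff_mem, map_sub, hτθ, map_one, sub_self]
        have hid : ρ τ π - π = (ρ τ π - θc τ * π) + (θc τ - 1) * π := by ring
        rw [hid]
        refine Submodule.add_mem _ (hθc τ) ?_
        rw [pow_two]
        exact Ideal.mul_mem_mul h1 hπ𝔓
      have hstep1 : ∀ x : 𝓞 F, ρ τ x - x ∈ 𝔓 ^ 2 := by
        intro x
        obtain ⟨r, hr⟩ := hsurj (Ideal.Quotient.mk 𝔓 x)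
        have h1 : algebraMap (𝓞 E) (𝓞 F) r - x ∈ 𝔓 := Ideal.Quotient.eq.mp hr
        have hy𝔓 : x - algebraMap (𝓞 E) (𝓞 F) r ∈ 𝔓 := by
          have h2 := Submodule.neg_mem _ h1
          simpa using h2
        obtain ⟨cx, hcx⟩ := hPde _ hy𝔓
        have hid : ρ τ x - x
            = (ρ τ ((x - algebraMap (𝓞 E) (𝓞 F) r) - cx * π)
                - ((x - algebraMap (𝓞 E) (𝓞 F) r) - cx * π))
              + (ρ τ cx - cx) * π + ρ τ cx * (ρ τ π - π) := by
          simp only [map_sub, map_mul, AlgEquiv.commutes]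
          ring
        rw [hid]
        refine Submodule.add_mem _ (Submodule.add_mem _ ?_ ?_) ?_
        · exact Submodule.sub_mem _ (hstab τ 2 _ hcx) hcx
        · rw [pow_two]
          exact Ideal.mul_mem_mul (hresid τ cx) hπ𝔓
        · exact Ideal.mul_mem_left _ _ hτπ
      have hpowj : ∀ (j : ℕ) (x : 𝓞 F), ρ (τ ^ j) x - x ∈ 𝔓 ^ 2 := by
        intro j
        induction j with
        | zero =>
          intro x
          have h1 : ρ (τ ^ 0) x = x := by
            rw [pow_zero, hρdef]
            simp only [map_one (galRestrict (𝓞 E) E F (𝓞 F))]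
            rfl
          rw [h1, sub_self]
          exact Submodule.zero_mem _
        | succ j ih =>
          intro x
          have hcomp : ρ (τ ^ (j + 1)) x = ρ τ (ρ (τ ^ j) x) := by
            rw [hρdef]
            rw [show τ ^ (j + 1) = τ * τ ^ j from by rw [pow_succ']]
            simp only [map_mul (galRestrict (𝓞 E) E F (𝓞 F))]
            rfl
          have hid : ρ (τ ^ (j + 1)) x - x
              = (ρ τ (ρ (τ ^ j) x) - ρ (τ ^ j) x) + (ρ (τ ^ j) x - x) := by
            rw [hcomp]; ring
          rw [hid]
          exact Submodule.add_mem _ (hstep1 _) (ih x)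
      set y : 𝓞 F := ∑ j ∈ Finset.range q, ρ (τ ^ j) π with hydef
      have hτy : ρ τ y = y := by
        rw [hydef, map_sum]
        have h1 : ∀ j, ρ τ (ρ (τ ^ j) π) = ρ (τ ^ (j + 1)) π := by
          intro j
          rw [hρdef]
          rw [show τ ^ (j + 1) = τ * τ ^ j from by rw [pow_succ']]
          simp only [map_mul (galRestrict (𝓞 E) E F (𝓞 F))]
          rfl
        rw [Finset.sum_congr rfl (fun j _ => h1 j)]
        have ha := Finset.sum_range_succ' (fun j => ρ (τ ^ j) π) q
        have hb := Finset.sum_range_succ (fun j => ρ (τ ^ j) π) q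
        have hc : ρ (τ ^ q) π = ρ (τ ^ 0) π := by rw [hτq, pow_zero]
        have hd := ha.symm.trans hb
        rw [hc, pow_zero] at hd
        exact add_right_cancel hd
      have hy𝔓 : y ∈ 𝔓 := Submodule.sum_mem _ (fun j _ => hρπ _)
      have hyq : y - (q : 𝓞 F) * π ∈ 𝔓 ^ 2 := by
        have hid : y - (q : 𝓞 F) * π = ∑ j ∈ Finset.range q, (ρ (τ ^ j) π - π) := by
          rw [Finset.sum_sub_distrib, ← hydef, Finset.sum_const, Finset.card_range,
            nsmul_eq_mul]
        rw [hid]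
        exact Submodule.sum_mem _ (fun j _ => hpowj j π)
      -- y lies in the ring of integers of the fixed field of τ
      set H := Subgroup.zpowers τ with hHdef
      have hordτ : orderOf τ = q := by
        have h1 : orderOf τ ∣ q := orderOf_dvd_of_pow_eq_one hτq
        rcases (Nat.Prime.eq_one_or_self_of_dvd hq _ h1) with h2 | h2
        · exact absurd (orderOf_eq_one_iff.mp h2) hτ1
        · exact h2
      have hcardH : Fintype.card H = q := by
        have h1 := Fintype.card_zpowers (x := τ)
        rw [hordτ] at h1
        exact h1
      set K := IntermediateField.fixedField H with hKdef
      have hstabτ : τ ∈ MulAction.stabilizer (F ≃ₐ[E] F) (algebraMap (𝓞 F) F y) := by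
        rw [MulAction.mem_stabilizer_iff]
        show τ (algebraMap (𝓞 F) F y) = algebraMap (𝓞 F) F y
        rw [← algebraMap_galRestrict_apply (𝓞 E)]
        rw [show galRestrict (𝓞 E) E F (𝓞 F) τ y = ρ τ y from rfl, hτy]
      have hle2 : H ≤ MulAction.stabilizer (F ≃ₐ[E] F) (algebraMap (𝓞 F) F y) :=
        Subgroup.zpowers_le.mpr hstabτ
      have hyfix : algebraMap (𝓞 F) F y ∈ K := fun g => hle2 g.2
      have hyint : IsIntegral ℤ (⟨algebraMap (𝓞 F) F y, hyfix⟩ : K) := by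
        rw [← isIntegral_algebraMap_iff (algebraMap K F).injective]
        exact NumberField.RingOfIntegers.isIntegral_coe y
      set yK : 𝓞 K := ⟨⟨algebraMap (𝓞 F) F y, hyfix⟩, hyint⟩ with hyKdef
      have hyKmap : algebraMap (𝓞 K) (𝓞 F) yK = y := by
        apply hinjS
        rw [← IsScalarTower.algebraMap_apply (𝓞 K) (𝓞 F) F,
          IsScalarTower.algebraMap_apply (𝓞 K) K F]
        rfl
      set 𝔭' : Ideal (𝓞 K) := Ideal.comap (algebraMap (𝓞 K) (𝓞 F)) 𝔓 with h𝔭'def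
      haveI h𝔭'p : 𝔭'.IsPrime := h𝔓prime.comap _
      have hinjKF : Function.Injective (algebraMap (𝓞 K) (𝓞 F)) :=
        FaithfulSMul.algebraMap_injective _ _
      have hinjEK : Function.Injective (algebraMap (𝓞 E) (𝓞 K)) :=
        FaithfulSMul.algebraMap_injective _ _
      have h𝔭'under : Ideal.comap (algebraMap (𝓞 E) (𝓞 K)) 𝔭' = 𝔭 := by
        rw [h𝔭'def, Ideal.comap_comap, ← IsScalarTower.algebraMap_eq, h𝔓over]
      have h𝔭'0 : 𝔭' ≠ ⊥ := by
        intro h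
        apply h𝔭ne
        rw [← h𝔭'under, h, Ideal.comap_bot_of_injective _ hinjEK]
      have hrt : Ideal.ramificationIdx' (S := 𝓞 F) 𝔭 𝔓
          = Ideal.ramificationIdx' (S := 𝓞 K) 𝔭 𝔭'
            * Ideal.ramificationIdx' (S := 𝓞 F) 𝔭' 𝔓 := by
        apply Ideal.ramificationIdx_algebra_tower
        · rw [Ne, Ideal.map_eq_bot_iff_of_injective hinjKF]; exact h𝔭'0
        · exact hmapne
        · exact Ideal.map_le_iff_le_comap.mpr le_rfl
      have hrankKF : Module.finrank K F = q := by
        rw [hKdef, IntermediateField.finrank_fixedField_eq_card, Nat.card_eq_fintype_card, hcardH]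
      have hrankEK : Module.finrank E K = q ^ (k - 1) := by
        have h1 : Module.finrank E K * Module.finrank K F = q ^ k := by
          rw [Module.finrank_mul_finrank, hdeg]
        rw [hrankKF] at h1
        have h2 : q ^ (k - 1) * q = q ^ k := by rw [← pow_succ]; congr 1; omega
        exact Nat.eq_of_mul_eq_mul_right hq.pos (h1.trans h2.symm)
      haveI : 𝔭'.LiesOver 𝔭 := ⟨h𝔭'under.symm⟩
      have hE1 : Ideal.ramificationIdx' (S := 𝓞 K) 𝔭 𝔭' ≤ q ^ (k - 1) := by
        have hsum2 := Ideal.sum_ramification_inertia (p := 𝔭) (S := 𝓞 K) E K h𝔭ne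
        have hmapne2 : Ideal.map (algebraMap (𝓞 E) (𝓞 K)) 𝔭 ≠ ⊥ :=
          fun h => h𝔭ne ((Ideal.map_eq_bot_iff_of_injective hinjEK).mp h)
        have hmem2 : 𝔭' ∈ (UniqueFactorizationMonoid.factors
            (Ideal.map (algebraMap (𝓞 E) (𝓞 K)) 𝔭)).toFinset := by
          rw [Multiset.mem_toFinset, UniqueFactorizationMonoid.factors_eq_normalizedFactors,
            Ideal.mem_normalizedFactors_iff hmapne2]
          exact ⟨h𝔭'p, Ideal.map_le_iff_le_comap.mpr (le_of_eq h𝔭'under.symm)⟩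
        have hterm2 : Ideal.ramificationIdx' (S := 𝓞 K) 𝔭 𝔭'
            * Ideal.inertiaDeg' (S := 𝓞 K) 𝔭 𝔭' ≤ Module.finrank E K := by
          rw [← hsum2]
          exact Finset.single_le_sum
            (f := fun P => Ideal.ramificationIdx' (S := 𝓞 K) 𝔭 P
              * Ideal.inertiaDeg' (S := 𝓞 K) 𝔭 P)
            (fun i _ => Nat.zero_le _) hmem2
        have hf2 : 0 < Ideal.inertiaDeg' (S := 𝓞 K) 𝔭 𝔭' :=
          Ideal.inertiaDeg'_pos 𝔭 𝔭'
        rw [hrankEK] at hterm2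
        nlinarith
      have hE2 : 2 ≤ Ideal.ramificationIdx' (S := 𝓞 F) 𝔭' 𝔓 := by
        by_contra h
        push_neg at h
        have hram' : Ideal.ramificationIdx' (S := 𝓞 F) 𝔭 𝔓 = q ^ k :=
          hdeg ▸ hram
        have h1 : q ^ k = Ideal.ramificationIdx' (S := 𝓞 K) 𝔭 𝔭'
            * Ideal.ramificationIdx' (S := 𝓞 F) 𝔭' 𝔓 := by
          rw [← hram']
          exact hrt
        have h2 : q ^ (k - 1) * q = q ^ k := by rw [← pow_succ]; congr 1; omega
        have h3 : 0 < q ^ (k - 1) := pow_pos hq.pos _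
        have h4 := hq.two_le
        nlinarith
      have hyK𝔭' : yK ∈ 𝔭' := by
        have h1 : algebraMap (𝓞 K) (𝓞 F) yK ∈ 𝔓 := by rw [hyKmap]; exact hy𝔓
        exact Ideal.mem_comap.mpr h1
      have hy2 : y ∈ 𝔓 ^ 2 := by
        have h1 : algebraMap (𝓞 K) (𝓞 F) yK ∈ Ideal.map (algebraMap (𝓞 K) (𝓞 F)) 𝔭' :=
          Ideal.mem_map_of_mem _ hyK𝔭'
        have h2 : Ideal.map (algebraMap (𝓞 K) (𝓞 F)) 𝔭'
            ≤ 𝔓 ^ Ideal.ramificationIdx' (S := 𝓞 F) 𝔭' 𝔓 :=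
          Ideal.le_pow_ramificationIdx
        have h3 : (𝔓 : Ideal (𝓞 F)) ^ Ideal.ramificationIdx' (S := 𝓞 F) 𝔭' 𝔓
            ≤ 𝔓 ^ 2 := Ideal.pow_le_pow_right hE2
        rw [hyKmap] at h1
        exact h3 (h2 h1)
      have hqπ : (q : 𝓞 F) * π ∈ 𝔓 ^ 2 := by
        have h1 := Submodule.sub_mem _ hy2 hyq
        simpa using h1
      have hqS0 : (q : 𝓞 F) ≠ 0 := Nat.cast_ne_zero.mpr hq0
      have hq𝔓 : (q : 𝓞 F) ∈ 𝔓 := by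
        have h1 := (pcnt_spec h𝔓prime hP0 (mul_ne_zero hqS0 hπ0) 2).mp hqπ
        rw [pcnt_mul h𝔓prime hP0 hqS0 hπ0, hπcnt] at h1
        have h2 : 1 ≤ pcnt 𝔓 (q : 𝓞 F) := by omega
        have h3 := (pcnt_spec h𝔓prime hP0 hqS0 1).mpr h2
        rwa [pow_one] at h3
      have hq𝔭 : (q : 𝓞 E) ∈ 𝔭 := by
        have h1 : algebraMap (𝓞 E) (𝓞 F) (q : 𝓞 E) = (q : 𝓞 F) := map_natCast _ q
        rw [← h𝔓over, Ideal.mem_comap, h1]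
        exact hq𝔓
      apply htame
      have hchar : (q : (𝓞 E) ⧸ 𝔭) = 0 := by
        rw [← map_natCast (Ideal.Quotient.mk 𝔭), Ideal.Quotient.eq_zero_iff_mem]
        exact hq𝔭
      have hdvdq : ringChar ((𝓞 E) ⧸ 𝔭) ∣ q := (ringChar.spec _ q).mp hchar
      rw [hdeg]
      exact dvd_trans hdvdq (dvd_pow_self q (by omega))
    have hcd := Subgroup.card_dvd_of_injective θ.toHomUnits hθinj
    rw [Nat.card_eq_fintype_card, hcardG] at hcd
    exact hcd
  -- THE KEY NON-NORM STATEMENT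
  have hkey : ¬ (QuotientGroup.mk (s := normSubgroup E F) (Units.mk0 _ hγE0)) ^ (q ^ (k - 1)) = 1 := by
    intro h1
    have h2 : QuotientGroup.mk (s := normSubgroup E F) ((Units.mk0 _ hγE0) ^ q ^ (k - 1)) = 1 := by
      show (QuotientGroup.mk' (normSubgroup E F)) ((Units.mk0 _ hγE0) ^ q ^ (k - 1)) = 1
      rw [map_pow]
      exact h1
    obtain ⟨u, hu⟩ := MonoidHom.mem_range.mp ((QuotientGroup.eq_one_iff _).mp h2)
    have hub : Algebra.norm E ((u : Fˣ) : F) = (algebraMap (𝓞 E) E γ) ^ (q ^ (k - 1)) := by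
      have h3 := congrArg Units.val hu
      simpa using h3
    set b : F := ((u : Fˣ) : F) with hbdef
    have hb0 : b ≠ 0 := Units.ne_zero _
    obtain ⟨s, t, htmem, hfrac⟩ := IsFractionRing.div_surjective (A := 𝓞 F) b
    have ht0 : t ≠ 0 := nonZeroDivisors.ne_zero htmem
    have htF : algebraMap (𝓞 F) F t ≠ 0 := fun h => ht0 (hinjS (by simpa using h))
    have hst : algebraMap (𝓞 F) F s = b * algebraMap (𝓞 F) F t := by
      rw [div_eq_iff htF] at hfrac
      exact hfrac
    have hs0 : s ≠ 0 := by
      intro h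
      rw [h, map_zero] at hst
      exact hb0 ((mul_eq_zero.mp hst.symm).resolve_right htF)
    have heq1 : NN t * γ ^ (q ^ (k - 1)) = NN s := by
      apply hinj
      rw [map_mul, map_pow, hNNalg, hNNalg, hst, map_mul (Algebra.norm E), hub]
      ring
    have hNNt0 : algebraMap (𝓞 E) (𝓞 F) (NN t) ≠ 0 := by
      rw [hNNprod]
      refine Finset.prod_ne_zero_iff.mpr (fun σ _ => ?_)
      exact fun h => ht0 ((map_eq_zero_iff _ (ρ σ).injective).mp h)
    have heqS : algebraMap (𝓞 E) (𝓞 F) (NN t) * (algebraMap (𝓞 E) (𝓞 F) γ) ^ (q ^ (k - 1))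
        = algebraMap (𝓞 E) (𝓞 F) (NN s) := by rw [← map_pow, ← map_mul, heq1]
    have hcnteq : pcnt 𝔓 t = pcnt 𝔓 s := by
      have h4 := congrArg (pcnt 𝔓) heqS
      rw [pcnt_mul h𝔓prime hP0 hNNt0 (pow_ne_zero _ hγS0), hpcnt_norm t ht0,
        hpcnt_norm s hs0] at h4
      have h5 : pcnt 𝔓 ((algebraMap (𝓞 E) (𝓞 F) γ) ^ (q ^ (k - 1))) = 0 := by
        apply pcnt_zero_of_not_mem h𝔓prime hP0 (pow_ne_zero _ hγS0)
        intro hmem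
        exact hγS (h𝔓prime.mem_of_pow_mem _ hmem)
      rw [h5] at h4
      exact Nat.eq_of_mul_eq_mul_left (Nat.pos_of_ne_zero hn0) (by omega)
    obtain ⟨x0, s', hx0P, hx0eq⟩ := perep h𝔓prime hP0 hs0 ht0 (le_of_eq hcnteq)
    have hx00 : x0 ≠ 0 := fun h => hx0P (h ▸ 𝔓.zero_mem)
    have hx0F : algebraMap (𝓞 F) F x0 ≠ 0 := fun h => hx00 (hinjS (by simpa using h))
    have hs'F : algebraMap (𝓞 F) F s' = algebraMap (𝓞 F) F x0 * b := by
      have h6 := congrArg (algebraMap (𝓞 F) F) hx0eq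
      rw [map_mul, map_mul, hst] at h6
      have h7 : (algebraMap (𝓞 F) F x0 * b) * algebraMap (𝓞 F) F t
          = algebraMap (𝓞 F) F s' * algebraMap (𝓞 F) F t := by
        rw [mul_comm (algebraMap (𝓞 F) F s') (algebraMap (𝓞 F) F t), ← h6]
        ring
      exact (mul_right_cancel₀ htF h7).symm
    have hs'0 : s' ≠ 0 := by
      intro h
      rw [h, map_zero] at hs'F
      exact (mul_ne_zero hx0F hb0) hs'F.symm
    have heq2 : NN x0 * γ ^ (q ^ (k - 1)) = NN s' := by
      apply hinj
      rw [map_mul, map_pow, hNNalg, hNNalg, hs'F, map_mul (Algebra.norm E), hub]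
    have heqS2 : algebraMap (𝓞 E) (𝓞 F) (NN x0) * (algebraMap (𝓞 E) (𝓞 F) γ) ^ (q ^ (k - 1))
        = algebraMap (𝓞 E) (𝓞 F) (NN s') := by rw [← map_pow, ← map_mul, heq2]
    have hres : (Ideal.Quotient.mk 𝔓 x0) ^ (q ^ k)
          * (Ideal.Quotient.mk 𝔓 (algebraMap (𝓞 E) (𝓞 F) γ)) ^ (q ^ (k - 1))
        = (Ideal.Quotient.mk 𝔓 s') ^ (q ^ k) := by
      have h8 := congrArg (Ideal.Quotient.mk 𝔓) heqS2
      rw [map_mul, map_pow, hnormres x0, hnormres s'] at h8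
      exact h8
    have hγL0 : Ideal.Quotient.mk 𝔓 (algebraMap (𝓞 E) (𝓞 F) γ) ≠ 0 := by
      rw [Ne, Ideal.Quotient.eq_zero_iff_mem]
      exact hγS
    have hxL0 : Ideal.Quotient.mk 𝔓 x0 ≠ 0 := by
      rw [Ne, Ideal.Quotient.eq_zero_iff_mem]
      exact hx0P
    have hm0 : q ^ (k - 1) ≠ 0 := pow_ne_zero _ hq0
    have hsL0 : Ideal.Quotient.mk 𝔓 s' ≠ 0 := by
      intro h
      rw [h, zero_pow hn0] at hres
      rcases mul_eq_zero.mp hres with h' | h'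
      · exact hxL0 (pow_eq_zero_iff hn0 |>.mp h')
      · exact hγL0 (pow_eq_zero_iff hm0 |>.mp h')
    have hαβ : (Units.mk0 _ hγL0) ^ (q ^ (k - 1))
        = ((Units.mk0 _ hsL0) * (Units.mk0 _ hxL0)⁻¹) ^ (q ^ k) := by
      apply Units.ext
      rw [Units.val_pow_eq_pow_val, Units.val_pow_eq_pow_val, Units.val_mul,
        Units.val_inv_eq_inv_val]
      show (Ideal.Quotient.mk 𝔓 (algebraMap (𝓞 E) (𝓞 F) γ)) ^ (q ^ (k - 1))
        = ((Ideal.Quotient.mk 𝔓 s') * (Ideal.Quotient.mk 𝔓 x0)⁻¹) ^ (q ^ k)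
      rw [mul_pow, inv_pow, ← div_eq_mul_inv, eq_div_iff (pow_ne_zero _ hxL0), ← hres]
      ring
    obtain ⟨c, hc⟩ := cyc_aux hq hk hdvdL _ _ hαβ
    obtain ⟨r, hr⟩ := hsurj ((c : ((𝓞 F) ⧸ 𝔓)ˣ) : (𝓞 F) ⧸ 𝔓)
    apply hsol
    refine ⟨r, ?_⟩
    rw [← h𝔓over, Ideal.mem_comap, ← Ideal.Quotient.eq_zero_iff_mem, map_sub, map_pow, map_sub,
      map_pow]
    have hr' : Ideal.Quotient.mk 𝔓 (algebraMap (𝓞 E) (𝓞 F) r) = ((c : ((𝓞 F) ⧸ 𝔓)ˣ) : _) := hr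
    have hc' : Ideal.Quotient.mk 𝔓 (algebraMap (𝓞 E) (𝓞 F) γ)
        = ((c : ((𝓞 F) ⧸ 𝔓)ˣ) : (𝓞 F) ⧸ 𝔓) ^ q := by
      have h9 := congrArg Units.val hc
      simpa using h9
    rw [hr', ← hc', sub_self]
  -- conclude: the order is exactly q ^ k
  have hpow1 : (QuotientGroup.mk (s := normSubgroup E F) (Units.mk0 _ hγE0)) ^ (q ^ k) = 1 := by
    have h1 : QuotientGroup.mk (s := normSubgroup E F) ((Units.mk0 _ hγE0) ^ q ^ k)
        = (QuotientGroup.mk (s := normSubgroup E F) (Units.mk0 _ hγE0)) ^ q ^ k :=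
      map_pow (QuotientGroup.mk' (normSubgroup E F)) _ _
    rw [← h1, QuotientGroup.eq_one_iff]
    have hFE0 : algebraMap E F (algebraMap (𝓞 E) E γ) ≠ 0 :=
      fun h => hγE0 ((map_eq_zero_iff _ (algebraMap E F).injective).mp h)
    refine MonoidHom.mem_range.mpr ⟨Units.mk0 _ hFE0, ?_⟩
    apply Units.ext
    show Algebra.norm E (algebraMap E F (algebraMap (𝓞 E) E γ)) = _
    rw [Algebra.norm_algebraMap, hdeg]
    simp
  have hdvd : orderOf (QuotientGroup.mk (s := normSubgroup E F) (Units.mk0 _ hγE0)) ∣ q ^ k :=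
    orderOf_dvd_of_pow_eq_one hpow1
  obtain ⟨i, hik, hoi⟩ := (Nat.dvd_prime_pow hq).mp hdvd
  rw [hdeg]
  rw [hoi]
  congr 1
  by_contra hik'
  have hik2 : i ≤ k - 1 := by omega
  exact hkey (orderOf_dvd_iff_pow_eq_one.mp (hoi ▸ pow_dvd_pow q hik2))
end

section
/- Let q be an odd prime number with q² not dividing 2^{q−1} − 1, and let k be a positive integer. Let F be the unique intermediate field of ℚ(ζ_{q^{k+1}}, i)/ℚ(i) with [F : ℚ(i)] = q^k. Then 1 + i is a non-norm element of F/ℚ(i). -/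
open NumberField IntermediateField

/-- The field `ℚ(i)` as a subfield of `ℂ`. -/
noncomputable def QI : IntermediateField ℚ ℂ := ℚ⟮(Complex.I)⟯

/-- The element `1 + i` of `ℚ(i)`. -/
noncomputable def onePlusI : QI :=
  ⟨1 + Complex.I, add_mem (one_mem _) (IntermediateField.mem_adjoin_simple_self ℚ Complex.I)⟩

lemma wief {q : ℕ} (hq : q.Prime) (hodd : Odd q) (hw : ¬ q ^ 2 ∣ 2 ^ (q - 1) - 1)
    (k f : ℕ) (hdvd : q ^ (k + 1) ∣ 2 ^ f - 1) : q ^ k ∣ f := by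
  rcases Nat.eq_zero_or_pos f with rfl | hf
  · simp
  haveI : Fact q.Prime := ⟨hq⟩
  have hq2 : q ≠ 2 := by rintro rfl; exact (by norm_num : ¬ Odd 2) hodd
  have hnq2dvd : ¬ (q ∣ 2) := fun h =>
    hq2 ((Nat.prime_dvd_prime_iff_eq hq Nat.prime_two).mp h)
  have h2ne : ((2:ℕ) : ZMod q) ≠ 0 := by
    rw [Ne, ZMod.natCast_eq_zero_iff]; exact hnq2dvd
  have hcast : ∀ m : ℕ, q ∣ 2 ^ m - 1 ↔ ((2:ℕ) : ZMod q) ^ m = 1 := by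
    intro m
    have h1 : (1:ℕ) ≤ 2 ^ m := Nat.one_le_two_pow
    rw [← ZMod.natCast_eq_zero_iff, Nat.cast_sub h1]
    push_cast
    constructor
    · intro h; linear_combination h
    · intro h; rw [h]; ring
  have hq1 : q ∣ 2 ^ f - 1 := dvd_trans (dvd_pow_self q (Nat.succ_ne_zero k)) hdvd
  set d := orderOf (((2:ℕ) : ZMod q)) with hd
  have hfd : d ∣ f := orderOf_dvd_of_pow_eq_one ((hcast f).mp hq1)
  have hferm : ((2:ℕ) : ZMod q) ^ (q - 1) = 1 := ZMod.pow_card_sub_one_eq_one h2ne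
  have hdq1 : d ∣ q - 1 := orderOf_dvd_of_pow_eq_one hferm
  have hqd : q ∣ 2 ^ d - 1 := (hcast d).mpr (pow_orderOf_eq_one _)
  have hnq2 : ¬ q ^ 2 ∣ 2 ^ d - 1 := by
    intro hc
    apply hw
    obtain ⟨c, hc'⟩ := hdq1
    calc q ^ 2 ∣ 2 ^ d - 1 := hc
      _ ∣ (2 ^ d) ^ c - 1 ^ c := Nat.sub_dvd_pow_sub_pow _ 1 c
      _ = 2 ^ (q-1) - 1 := by rw [← pow_mul, one_pow, ← hc']
  obtain ⟨m, rfl⟩ := hfd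
  have hm0 : m ≠ 0 := by rintro rfl; simp at hf
  have hxnd : ¬ (q ∣ 2 ^ d) := fun hc => hnq2dvd (Nat.Prime.dvd_of_dvd_pow hq hc)
  have hlte := Nat.emultiplicity_pow_sub_pow hq hodd (x := 2 ^ d) (y := 1)
    (by simpa using hqd) hxnd m
  rw [one_pow, ← pow_mul] at hlte
  have he1 : emultiplicity q (2 ^ d - 1) = (1 : ℕ) := by
    rw [emultiplicity_eq_coe]
    exact ⟨by simpa using hqd, by simpa using hnq2⟩
  have hk1 : ((k+1 : ℕ) : ℕ∞) ≤ emultiplicity q (2 ^ (d * m) - 1) :=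
    pow_dvd_iff_le_emultiplicity.mp hdvd
  rw [hlte, he1] at hk1
  have hfin : FiniteMultiplicity q m :=
    Nat.finiteMultiplicity_iff.mpr ⟨hq.ne_one, Nat.pos_of_ne_zero hm0⟩
  rw [hfin.emultiplicity_eq_multiplicity] at hk1
  have hkm : (k : ℕ) ≤ multiplicity q m := by
    have h' : ((k : ℕ∞) + 1) ≤ (multiplicity q m : ℕ∞) + 1 := by
      push_cast at hk1 ⊢
      calc (k : ℕ∞) + 1 = ((k+1 : ℕ) : ℕ∞) := by push_cast; ring
        _ ≤ 1 + (multiplicity q m : ℕ∞) := hk1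
        _ = (multiplicity q m : ℕ∞) + 1 := by ring
    have := WithTop.add_le_add_iff_right (by simp : (1:ℕ∞) ≠ ⊤) |>.mp h'
    exact ENat.coe_le_coe.mp this
  have hdm : q ^ k ∣ m := (pow_dvd_iff_le_emultiplicity (a := q) (b := m)).mpr
    (by rw [hfin.emultiplicity_eq_multiplicity]; exact_mod_cast hkm)
  exact Dvd.dvd.mul_left hdm d

lemma L3 {O : Type*} [CommRing O] [IsDomain O] [IsDedekindDomain O]
    [Module.Free ℤ O] [Module.Finite ℤ O]
    {q k : ℕ} (hq : q.Prime) (hodd : Odd q) (hw : ¬ q ^ 2 ∣ 2 ^ (q-1) - 1)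
    {ζ : O} (hζ1 : ζ ^ (q ^ (k+1)) = 1) (hζq : (ζ ^ (q ^ k) - 1) ∣ (q : O))
    (I : Ideal O) : q ^ k ∣ padicValNat 2 (Ideal.absNorm I) := by
  induction I using UniqueFactorizationMonoid.induction_on_prime with
  | h₁ => simp
  | h₂ I hI => rw [Ideal.isUnit_iff.mp hI]; simp
  | h₃ I P hI hP ih =>
    have hPbot : P ≠ ⊥ := hP.ne_zero
    have hIbot : I ≠ ⊥ := hI
    have hPmax : P.IsMaximal := Ideal.IsPrime.isMaximal (Ideal.isPrime_of_prime hP) hPbot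
    haveI := hPmax
    letI : Fintype (O ⧸ P) := @Fintype.ofFinite _ (Ideal.finiteQuotientOfFreeOfNeBot P hPbot)
    letI : Fintype (O ⧸ I) := @Fintype.ofFinite _ (Ideal.finiteQuotientOfFreeOfNeBot I hIbot)
    have hNP : Ideal.absNorm P ≠ 0 := by
      rw [Ideal.absNorm_ne_zero_iff]; exact Finite.of_fintype _
    have hNI : Ideal.absNorm I ≠ 0 := by
      rw [Ideal.absNorm_ne_zero_iff]; exact Finite.of_fintype _
    rw [_root_.map_mul, padicValNat.mul hNP hNI]
    refine Nat.dvd_add ?_ ih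
    -- now handle the prime P
    letI : Field (O ⧸ P) := Ideal.Quotient.field P
    set p := ringChar (O ⧸ P) with hp
    haveI : CharP (O ⧸ P) p := ringChar.charP _
    obtain ⟨n, hpprime, hcard⟩ := FiniteField.card (O ⧸ P) p
    have habs : Ideal.absNorm P = Fintype.card (O ⧸ P) := by
      rw [Ideal.absNorm_apply, Submodule.cardQuot_apply, Nat.card_eq_fintype_card]
    by_cases hp2 : p = 2
    · -- char 2 case
      rw [habs, hcard, hp2, padicValNat.prime_pow]
      refine wief hq hodd hw k n ?_
      -- q^(k+1) ∣ 2^n - 1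
      set ζb : O ⧸ P := Ideal.Quotient.mk P ζ with hζb
      have h1 : ζb ^ (q ^ (k+1)) = 1 := by
        rw [hζb, ← map_pow, hζ1, map_one]
      have h2 : ζb ^ (q ^ k) ≠ 1 := by
        intro hc
        have hmem : ζ ^ (q ^ k) - 1 ∈ P := by
          rw [← Ideal.Quotient.eq_zero_iff_mem]
          rw [map_sub, map_pow, map_one, ← hζb, hc, sub_self]
        have hqP : (q : O) ∈ P := by
          obtain ⟨c, hc'⟩ := hζq
          rw [hc']
          exact Ideal.mul_mem_right _ _ hmem
        have h2P : (2 : O) ∈ P := by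
          have : ((2 : ℕ) : O ⧸ P) = 0 := by
            have := CharP.cast_eq_zero (O ⧸ P) p
            rw [hp2] at this
            exact_mod_cast this
          rw [← Ideal.Quotient.eq_zero_iff_mem]
          push_cast at this ⊢
          exact this
        -- 2 and q coprime
        have hcop : IsCoprime (2 : O) (q : O) := by
          have : Nat.Coprime 2 q := (Nat.coprime_primes Nat.prime_two hq).mpr
            (fun h => by subst h; simp [Nat.odd_iff] at hodd)
          have h := Nat.isCoprime_iff_coprime.mpr this
          exact h.map (algebraMap ℤ O) |>.of_isCoprime_of_dvd_left (by norm_num) |>.of_isCoprime_of_dvd_right (by push_cast; exact dvd_rfl)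
        obtain ⟨a, b, hab⟩ := hcop
        have : (1 : O) ∈ P := by
          rw [← hab]
          exact Ideal.add_mem _ (Ideal.mul_mem_left _ _ h2P) (Ideal.mul_mem_left _ _ hqP)
        exact hPmax.ne_top (Ideal.eq_top_of_isUnit_mem _ this isUnit_one)
      -- orderOf ζb = q^(k+1)
      have hdvd : orderOf ζb ∣ q ^ (k+1) := orderOf_dvd_of_pow_eq_one h1
      obtain ⟨j, hj, hordeq⟩ := (Nat.dvd_prime_pow hq).mp hdvd
      have hj' : j = k + 1 := by
        by_contra hne
        have : j ≤ k := by omega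
        exact h2 (orderOf_dvd_iff_pow_eq_one.mp (hordeq ▸ pow_dvd_pow q this))
      have hord : orderOf ζb = q ^ (k+1) := by rw [hordeq, hj']
      have hunit : IsUnit ζb := IsUnit.of_pow_eq_one h1 (pow_ne_zero _ hq.pos.ne')
      letI := Classical.decEq (O ⧸ P)
      have hcard_u := orderOf_dvd_card (x := hunit.unit)
      rw [← orderOf_units (y := hunit.unit), IsUnit.unit_spec, hord] at hcard_u
      rw [Fintype.card_units, hcard, hp2] at hcard_u
      exact hcard_u
    · -- odd char case
      have : ¬ (2 ∣ Ideal.absNorm P) := by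
        rw [habs, hcard]
        intro hc
        exact hp2 ((Nat.prime_dvd_prime_iff_eq Nat.prime_two hpprime).mp
          (Nat.Prime.dvd_of_dvd_pow Nat.prime_two hc)).symm
      rw [padicValNat.eq_zero_of_not_dvd this]
      exact dvd_zero _

lemma isPrimitiveRoot_I : IsPrimitiveRoot Complex.I 4 := by
  constructor
  · exact Complex.I_pow_four
  · intro l hl
    have h4 : Complex.I ^ (4 * (l / 4)) = 1 := by
      rw [pow_mul, Complex.I_pow_four, one_pow]
    have hmod : Complex.I ^ (l % 4) = 1 := by
      have := Nat.div_add_mod l 4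
      calc Complex.I ^ (l % 4) = Complex.I ^ (4 * (l / 4)) * Complex.I ^ (l % 4) := by
            rw [h4, one_mul]
        _ = Complex.I ^ (4 * (l / 4) + l % 4) := by rw [pow_add]
        _ = 1 := by rw [this]; exact hl
    have hlt : l % 4 < 4 := Nat.mod_lt _ (by norm_num)
    interval_cases h : l % 4
    · omega
    · simp [Complex.ext_iff] at hmod
    · rw [pow_two, Complex.I_mul_I] at hmod
      exact absurd hmod (by norm_num [Complex.ext_iff])
    · rw [pow_succ, pow_two, Complex.I_mul_I] at hmod
      simp [Complex.ext_iff] at hmod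

lemma isIntegral_I : IsIntegral ℚ Complex.I :=
  ⟨Polynomial.X ^ 2 + 1, by
    constructor
    · have := Polynomial.monic_X_pow_add_C (R := ℚ) (1:ℚ) (two_ne_zero)
      simpa using this
    · simp⟩

lemma finrank_QI : Module.finrank ℚ ↥QI = 2 := by
  rw [QI, IntermediateField.adjoin.finrank isIntegral_I,
    ← Polynomial.cyclotomic_eq_minpoly_rat isPrimitiveRoot_I (by norm_num),
    Polynomial.natDegree_cyclotomic]
  decide

lemma normOnePlusI : Algebra.norm ℚ onePlusI = 2 ∨ Algebra.norm ℚ onePlusI = -2 := by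
  set iE : ↥QI := ⟨Complex.I, IntermediateField.mem_adjoin_simple_self ℚ Complex.I⟩ with hiE
  have hsq : onePlusI ^ 2 = 2 * iE := by
    ext
    push_cast [onePlusI, hiE]
    push_cast
    ring_nf
    rw [Complex.I_sq]
    have : ((2 : ↥QI) : ℂ) = 2 := by norm_cast
    rw [this]
    ring
  have hi4 : iE ^ 4 = 1 := by
    ext; push_cast [hiE]; simp
  have hni : Algebra.norm ℚ iE = 1 ∨ Algebra.norm ℚ iE = -1 := by
    have h4 : (Algebra.norm ℚ iE) ^ 4 = 1 := by
      rw [← map_pow, hi4, map_one]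
    have h2 : (Algebra.norm ℚ iE) ^ 2 = 1 := by nlinarith [sq_nonneg ((Algebra.norm ℚ iE)^2 - 1), sq_nonneg ((Algebra.norm ℚ iE)^2 + 1)]
    rw [pow_two, mul_self_eq_one_iff] at h2
    exact h2
  have hN2 : Algebra.norm ℚ (2 : ↥QI) = 4 := by
    rw [show (2 : ↥QI) = algebraMap ℚ ↥QI 2 from (map_ofNat _ 2).symm,
      Algebra.norm_algebraMap, finrank_QI]
    norm_num
  have key : (Algebra.norm ℚ onePlusI) ^ 2 = 4 * Algebra.norm ℚ iE := by
    rw [← map_pow, hsq, map_mul, hN2]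
  rcases hni with h | h
  · rw [h, mul_one] at key
    have hz : (Algebra.norm ℚ onePlusI - 2) * (Algebra.norm ℚ onePlusI + 2) = 0 := by
      linear_combination key
    rcases mul_eq_zero.mp hz with h' | h'
    · left; linarith
    · right; linarith
  · rw [h] at key
    nlinarith [sq_nonneg (Algebra.norm ℚ onePlusI)]

lemma sub_one_dvd_natCast {O : Type*} [CommRing O] [IsDomain O] {q : ℕ} (hq : q.Prime)
    {ξ : O} (hξ : IsPrimitiveRoot ξ q) : (ξ - 1) ∣ (q : O) := by
  haveI : Fact q.Prime := ⟨hq⟩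
  have h := Polynomial.cyclotomic_eq_prod_X_sub_primitiveRoots hξ
  have heval : Polynomial.eval 1 (Polynomial.cyclotomic q O) = q :=
    Polynomial.eval_one_cyclotomic_prime
  rw [h, Polynomial.eval_prod] at heval
  have hmem : ξ ∈ primitiveRoots q O := (mem_primitiveRoots hq.pos).mpr hξ
  have hdvd : Polynomial.eval 1 (Polynomial.X - Polynomial.C ξ) ∣
      ∏ μ ∈ primitiveRoots q O, Polynomial.eval 1 (Polynomial.X - Polynomial.C μ) :=
    Finset.dvd_prod_of_mem _ hmem
  rw [heval] at hdvd
  simp only [Polynomial.eval_sub, Polynomial.eval_X, Polynomial.eval_C] at hdvd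
  calc (ξ - 1) ∣ (1 - ξ) := ⟨-1, by ring⟩
    _ ∣ (q : O) := hdvd

set_option maxHeartbeats 1600000 in
set_option synthInstance.maxHeartbeats 400000 in
theorem statement8 (q k : ℕ) (hq : q.Prime) (hodd : Odd q)
    (hwief : ¬ q ^ 2 ∣ 2 ^ (q - 1) - 1) (hk : 0 < k)
    (ζ : ℂ) (hζ : IsPrimitiveRoot ζ (q ^ (k + 1)))
    (F : IntermediateField ↥QI ℂ) (hFsub : F ≤ IntermediateField.adjoin ↥QI {ζ})
    (hFdeg : Module.finrank ↥QI ↥F = q ^ k) :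
    IsNonNormElement ↥QI ↥F onePlusI := by
  have hq0 : 0 < q := hq.pos
  have h0 : onePlusI ≠ 0 := by
    intro h
    have h' : ((onePlusI : ↥QI) : ℂ) = 0 := by rw [h]; rfl
    rw [onePlusI] at h'
    simp [Complex.ext_iff] at h'
  refine ⟨h0, ?_⟩
  rw [hFdeg]
  haveI hFD : FiniteDimensional ↥QI ↥F :=
    FiniteDimensional.of_finrank_pos (by rw [hFdeg]; positivity)
  -- the element of the quotient group
  set u0 : (↥QI)ˣ := Units.mk0 onePlusI h0 with hu0
  have hmknorm : ∀ n : ℕ,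
      ((QuotientGroup.mk (s := normSubgroup ↥QI ↥F) u0) ^ n = 1 ↔
        u0 ^ n ∈ normSubgroup ↥QI ↥F) := by
    intro n
    rw [← QuotientGroup.mk_pow, QuotientGroup.eq_one_iff]
  have hx1 : (QuotientGroup.mk (s := normSubgroup ↥QI ↥F) u0) ^ (q ^ k) = 1 := by
    rw [hmknorm]
    have hne : algebraMap ↥QI ↥F onePlusI ≠ 0 := fun hc =>
      h0 ((algebraMap ↥QI ↥F).injective (by rw [hc, map_zero]))
    refine ⟨Units.mk0 (algebraMap ↥QI ↥F onePlusI) hne, ?_⟩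
    ext
    simp only [Units.coe_map, Units.val_mk0, MonoidHom.coe_coe, Units.val_pow_eq_pow_val, hu0]
    rw [Algebra.norm_algebraMap, hFdeg]
  -- the key non-norm statement
  have hne1 : (QuotientGroup.mk (s := normSubgroup ↥QI ↥F) u0) ^ (q ^ (k-1)) ≠ 1 := by
    intro hone
    rw [hmknorm] at hone
    obtain ⟨u, hu⟩ := hone
    have hα : Algebra.norm ↥QI (↑u : ↥F) = onePlusI ^ (q ^ (k-1)) := by
      have := congrArg Units.val hu
      simpa [hu0] using this
    clear hu
    -- set up the cyclotomic field
    set Mf := IntermediateField.adjoin ↥QI {ζ} with hMf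
    have hζM : ζ ∈ Mf := IntermediateField.mem_adjoin_simple_self _ ζ
    have hqk1 : q ^ (k+1) ≠ 0 := pow_ne_zero _ hq0.ne'
    have hζint : IsIntegral ↥QI ζ :=
      ⟨Polynomial.X ^ (q ^ (k+1)) - Polynomial.C 1, Polynomial.monic_X_pow_sub_C 1 hqk1,
        by simp [hζ.pow_eq_one]⟩
    haveI : FiniteDimensional ↥QI ↥Mf := IntermediateField.adjoin.finiteDimensional hζint
    haveI : FiniteDimensional ℚ ↥QI := by
      rw [QI]; exact IntermediateField.adjoin.finiteDimensional isIntegral_I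
    haveI : FiniteDimensional ℚ ↥Mf := FiniteDimensional.trans ℚ ↥QI ↥Mf
    haveI : NumberField ↥Mf := ⟨⟩
    letI : Algebra ↥F ↥Mf := (IntermediateField.inclusion hFsub).toAlgebra
    haveI hT1 : IsScalarTower ↥QI ↥F ↥Mf := IsScalarTower.of_algebraMap_eq (fun r => rfl)
    haveI hT2 : IsScalarTower ℚ ↥F ↥Mf :=
      IsScalarTower.of_algebraMap_eq' (Subsingleton.elim _ _)
    haveI : FiniteDimensional ↥F ↥Mf := FiniteDimensional.right ↥QI ↥F ↥Mf
    haveI : Algebra.IsAlgebraic ℚ ↥Mf := Algebra.IsAlgebraic.of_finite ℚ ↥Mf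
    haveI : Algebra.IsAlgebraic ↥QI ↥Mf := Algebra.IsAlgebraic.of_finite ↥QI ↥Mf
    -- degree bound for Mf
    have hMdeg : Module.finrank ↥QI ↥Mf ≤ q ^ k * (q - 1) := by
      have hdvd : minpoly ↥QI ζ ∣ Polynomial.cyclotomic (q ^ (k+1)) ↥QI := by
        apply minpoly.dvd
        rw [Polynomial.aeval_def, ← Polynomial.eval_map, Polynomial.map_cyclotomic]
        exact (hζ.isRoot_cyclotomic (Nat.pos_of_ne_zero hqk1))
      have hdeg := Polynomial.natDegree_le_of_dvd hdvd
        (Polynomial.cyclotomic_ne_zero _ ↥QI)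
      rw [Polynomial.natDegree_cyclotomic, Nat.totient_prime_pow hq (Nat.succ_pos k),
        Nat.succ_sub_one] at hdeg
      rw [hMf, IntermediateField.adjoin.finrank hζint]
      exact hdeg
    set m := Module.finrank ↥F ↥Mf with hm
    have hmE : q ^ k * m = Module.finrank ↥QI ↥Mf := by
      rw [← hFdeg, hm]; exact Module.finrank_mul_finrank _ _ _
    have hmle : m ≤ q - 1 := by
      have := hmE ▸ hMdeg
      exact Nat.le_of_mul_le_mul_left this (by positivity)
    have hmpos : 0 < m := Module.finrank_pos
    -- norms
    set β : ↥Mf := algebraMap ↥F ↥Mf (↑u : ↥F) with hβ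
    have hβne : β ≠ 0 := fun hc => u.ne_zero ((algebraMap ↥F ↥Mf).injective
      (by rw [map_zero, ← hβ]; exact hc))
    set s := q ^ (k-1) * m with hs
    have hNβ : Algebra.norm ℚ β = (Algebra.norm ℚ onePlusI) ^ s := by
      rw [← Algebra.norm_norm (R := ℚ) (S := ↥QI) (a := β),
        ← Algebra.norm_norm (R := ↥QI) (S := ↥F) (a := β), hβ,
        Algebra.norm_algebraMap, map_pow, hα, ← map_pow, ← pow_mul, map_pow]
    -- ring of integers
    set O := 𝓞 ↥Mf with hO
    have hζMint : IsIntegral ℤ (⟨ζ, hζM⟩ : ↥Mf) :=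
      ⟨Polynomial.X ^ (q ^ (k+1)) - Polynomial.C 1, Polynomial.monic_X_pow_sub_C 1 hqk1, by
        apply Subtype.ext
        push_cast [Polynomial.eval₂_sub, Polynomial.eval₂_pow]
        simp [hζ.pow_eq_one]⟩
    set ζO : O := ⟨⟨ζ, hζM⟩, hζMint⟩ with hζO
    have hcoeinj : Function.Injective ((algebraMap ↥Mf ℂ).comp (algebraMap O ↥Mf)) := by
      intro a b hab
      exact IsFractionRing.injective O ↥Mf ((algebraMap ↥Mf ℂ).injective hab)
    have hζOroot : IsPrimitiveRoot ζO (q ^ (k+1)) := by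
      apply IsPrimitiveRoot.of_map_of_injective (f := (algebraMap ↥Mf ℂ).comp (algebraMap O ↥Mf))
      · exact hζ
      · exact hcoeinj
    have h1 : ζO ^ (q ^ (k+1)) = 1 := hζOroot.pow_eq_one
    have hξ : IsPrimitiveRoot (ζO ^ (q ^ k)) q := hζOroot.pow (Nat.pos_of_ne_zero hqk1) (pow_succ q k)
    have h2 : ((ζO ^ (q ^ k)) - 1) ∣ ((q : ℕ) : O) := sub_one_dvd_natCast hq hξ
    have hL3 := fun (I : Ideal O) => L3 hq hodd hwief h1 h2 I
    -- fractions
    obtain ⟨X, Y, hY, hXY⟩ := IsFractionRing.div_surjective (A := O) β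
    have hYne : (algebraMap O ↥Mf) Y ≠ 0 := by
      intro hc
      exact nonZeroDivisors.ne_zero hY (by
        exact (IsFractionRing.injective O ↥Mf) (by rw [hc, map_zero]))
    have hmuleq : β * (algebraMap O ↥Mf) Y = (algebraMap O ↥Mf) X := by
      rw [← hXY]
      exact div_mul_cancel₀ _ hYne
    have hXne : (algebraMap O ↥Mf) X ≠ 0 := by
      rw [← hmuleq]; exact mul_ne_zero hβne hYne
    -- apply norms
    have hnormeq : Algebra.norm ℚ β * Algebra.norm ℚ ((algebraMap O ↥Mf) Y)
        = Algebra.norm ℚ ((algebraMap O ↥Mf) X) := by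
      rw [← map_mul, hmuleq]
    set nx : ℤ := Algebra.norm ℤ X with hnx
    set ny : ℤ := Algebra.norm ℤ Y with hny
    have hnxq : (nx : ℚ) = Algebra.norm ℚ ((algebraMap O ↥Mf) X) := Algebra.coe_norm_int X
    have hnyq : (ny : ℚ) = Algebra.norm ℚ ((algebraMap O ↥Mf) Y) := Algebra.coe_norm_int Y
    have hnyne : ny ≠ 0 := by
      intro hc
      rw [hc] at hnyq
      exact (Algebra.norm_ne_zero_iff.mpr hYne) (by exact_mod_cast hnyq.symm)
    have hnxne : nx ≠ 0 := by
      intro hc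
      rw [hc] at hnxq
      exact (Algebra.norm_ne_zero_iff.mpr hXne) (by exact_mod_cast hnxq.symm)
    -- the integer equation
    have habs : 2 ^ s * ny.natAbs = nx.natAbs := by
      rcases normOnePlusI with hc | hc
      · have : ((2:ℤ) : ℚ) ^ s * (ny:ℚ) = (nx:ℚ) := by
          rw [hnyq, hnxq, ← hnormeq, hNβ, hc]; push_cast; ring
        have hZ : (2:ℤ) ^ s * ny = nx := by exact_mod_cast this
        calc 2 ^ s * ny.natAbs = ((2:ℤ) ^ s * ny).natAbs := by
              rw [Int.natAbs_mul, Int.natAbs_pow]; rfl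
          _ = nx.natAbs := by rw [hZ]
      · have : ((-2:ℤ) : ℚ) ^ s * (ny:ℚ) = (nx:ℚ) := by
          rw [hnyq, hnxq, ← hnormeq, hNβ, hc]; push_cast; ring
        have hZ : (-2:ℤ) ^ s * ny = nx := by exact_mod_cast this
        calc 2 ^ s * ny.natAbs = ((-2:ℤ) ^ s * ny).natAbs := by
              rw [Int.natAbs_mul, Int.natAbs_pow]; rfl
          _ = nx.natAbs := by rw [hZ]
    have hvx : q ^ k ∣ padicValNat 2 nx.natAbs := by
      have := hL3 (Ideal.span {X})
      rwa [Ideal.absNorm_span_singleton] at this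
    have hvy : q ^ k ∣ padicValNat 2 ny.natAbs := by
      have := hL3 (Ideal.span {Y})
      rwa [Ideal.absNorm_span_singleton] at this
    have hval : padicValNat 2 nx.natAbs = s + padicValNat 2 ny.natAbs := by
      rw [← habs, padicValNat.mul (pow_ne_zero _ two_ne_zero)
        (Int.natAbs_ne_zero.mpr hnyne), padicValNat.prime_pow]
    have hqs : q ^ k ∣ s := by
      have h' : q ^ k ∣ s + padicValNat 2 ny.natAbs := hval ▸ hvx
      exact (Nat.dvd_add_right hvy).mp (by rwa [Nat.add_comm] at h')
    -- contradiction
    have hqm : q ∣ m := by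
      have hks : q ^ (k-1) * q ∣ q ^ (k-1) * m := by
        have : q ^ (k-1) * q = q ^ k := by
          rw [← pow_succ]; congr 1; omega
        rw [this]; exact hqs
      exact (Nat.mul_dvd_mul_iff_left (by positivity : 0 < q ^ (k-1))).mp hks
    have := Nat.le_of_dvd hmpos hqm
    omega
  obtain ⟨j, hj, hord⟩ := (Nat.dvd_prime_pow hq).mp (orderOf_dvd_of_pow_eq_one hx1)
  rw [hord]
  congr 1
  by_contra hjk
  have hjk' : j ≤ k - 1 := by omega
  exact hne1 (orderOf_dvd_iff_pow_eq_one.mp (hord ▸ pow_dvd_pow q hjk'))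
end

section
/- The extension ℚ(ζ_3, i)/ℚ(i) is a cyclic extension of degree 2 and 1 + i is a non-norm element of ℚ(ζ_3, i)/ℚ(i). -/
open NumberField IntermediateField

namespace Stmt9
open Complex

/-- Parity ring hom ℤ[i] → ZMod 2, x ↦ x.re + x.im. -/
def par : GaussianInt →+* ZMod 2 where
  toFun x := ((x.re + x.im : ℤ) : ZMod 2)
  map_one' := by norm_num [Zsqrtd.re_one, Zsqrtd.im_one]
  map_zero' := by norm_num [Zsqrtd.re_zero, Zsqrtd.im_zero]
  map_add' x y := by
    simp only [Zsqrtd.re_add, Zsqrtd.im_add]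
    push_cast
    ring
  map_mul' x y := by
    simp only [Zsqrtd.re_mul, Zsqrtd.im_mul]
    push_cast
    have h2 : (2 : ZMod 2) = 0 := by decide
    linear_combination (-((x.im : ZMod 2) * (y.im : ZMod 2))) * h2

lemma par_eq_zero_iff (x : GaussianInt) : par x = 0 ↔ (⟨1,1⟩ : GaussianInt) ∣ x := by
  constructor
  · intro h
    have h2 : (2:ℤ) ∣ (x.re + x.im) := by
      rwa [show par x = ((x.re + x.im : ℤ) : ZMod 2) from rfl,
        ZMod.intCast_zmod_eq_zero_iff_dvd] at h
    obtain ⟨k, hk⟩ := h2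
    refine ⟨⟨k, x.im - k⟩, ?_⟩
    ext <;> simp [Zsqrtd.re_mul, Zsqrtd.im_mul] <;> omega
  · rintro ⟨y, rfl⟩
    rw [map_mul]
    have : par ⟨1,1⟩ = 0 := by decide
    rw [this, zero_mul]

lemma zmod2_key : ∀ a b : ZMod 2, a^2 - a*b + b^2 = 0 → a = 0 ∧ b = 0 := by decide

lemma descent : ∀ n : ℕ, ∀ C A B : GaussianInt, C.norm.natAbs = n →
    A^2 - A*B + B^2 = ⟨1,1⟩ * C^2 → C = 0 := by
  intro n
  induction n using Nat.strong_induction_on with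
  | _ n ih =>
    intro C A B hn heq
    by_contra hC
    have hπ : (⟨1,1⟩ : GaussianInt) ≠ 0 := by decide
    have hpar : par A ^ 2 - par A * par B + par B ^ 2 = 0 := by
      have h := congrArg par heq
      simp only [map_add, map_sub, map_mul, map_pow] at h
      rw [show par ⟨1,1⟩ = 0 by decide, zero_mul] at h
      exact h
    obtain ⟨hA, hB⟩ := zmod2_key _ _ hpar
    obtain ⟨A', rfl⟩ := (par_eq_zero_iff A).mp hA
    obtain ⟨B', rfl⟩ := (par_eq_zero_iff B).mp hB
    have h2 : (⟨1,1⟩ : GaussianInt) * (A'^2 - A'*B' + B'^2) = C^2 := by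
      apply mul_left_cancel₀ hπ
      linear_combination heq
    have hparC : par C = 0 := by
      have := congrArg par h2
      simp only [map_add, map_sub, map_mul, map_pow] at this
      rw [show par ⟨1,1⟩ = 0 by decide, zero_mul] at this
      have hsq : par C ^ 2 = 0 := this.symm
      have : ∀ c : ZMod 2, c^2 = 0 → c = 0 := by decide
      exact this _ hsq
    obtain ⟨C', rfl⟩ := (par_eq_zero_iff C).mp hparC
    have h3 : A'^2 - A'*B' + B'^2 = ⟨1,1⟩ * C'^2 := by
      apply mul_left_cancel₀ hπ
      linear_combination h2
    have hC' : C' ≠ 0 := fun h => hC (by rw [h, mul_zero])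
    have hnorm0 : C'.norm.natAbs ≠ 0 := fun h0 =>
      hC' ((Zsqrtd.norm_eq_zero_iff (by norm_num) C').mp (Int.natAbs_eq_zero.mp h0))
    have hlt : C'.norm.natAbs < n := by
      have : (⟨1,1⟩ * C' : GaussianInt).norm = 2 * C'.norm := by
        rw [Zsqrtd.norm_mul]; norm_num [Zsqrtd.norm_def]
      rw [← hn, this, Int.natAbs_mul]
      norm_num
      omega
    exact hC' (ih _ hlt C' A' B' rfl h3)


lemma rat_sq_ne_three (q : ℚ) : q^2 ≠ 3 := by
  intro h
  have h3 : Irrational (Real.sqrt 3) := by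
    simpa using (Nat.prime_three).irrational_sqrt
  have hq : ((|q| : ℚ) : ℝ) = Real.sqrt 3 := by
    rw [show ((3:ℝ)) = ((q:ℝ))^2 by exact_mod_cast h.symm, Real.sqrt_sq_eq_abs]
    push_cast
    ring
  exact h3 ⟨|q|, hq⟩

lemma no_sqrt_neg3 (p q : ℚ) : ((p:ℂ) + q * I)^2 ≠ -3 := by
  intro h
  have h' : ((p^2 - q^2 : ℚ) : ℂ) + ((2*p*q : ℚ) : ℂ) * I = -3 := by
    push_cast
    linear_combination h - (q:ℂ)^2 * Complex.I_sq
  have hre : p^2 - q^2 = -3 := by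
    have := congrArg Complex.re h'
    simp only [Complex.add_re, Complex.mul_re, Complex.ratCast_re, Complex.ratCast_im,
      Complex.I_re, Complex.I_im, Complex.neg_re] at this
    norm_num at this
    exact_mod_cast this
  have him : p = 0 ∨ q = 0 := by
    have := congrArg Complex.im h'
    simp only [Complex.add_im, Complex.mul_im, Complex.ratCast_re, Complex.ratCast_im,
      Complex.I_re, Complex.I_im, Complex.neg_im] at this
    norm_num at this
    exact_mod_cast this
  rcases him with h0 | h0
  · rw [h0] at hre
    exact rat_sq_ne_three q (by linarith)
  · rw [h0] at hre
    nlinarith [sq_nonneg p]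

lemma rat_num_mul (p : ℚ) (m : ℤ) : ((p.num * m : ℤ) : ℚ) = p * ((p.den : ℤ) * m : ℤ) := by
  have hden : ((p.den : ℚ)) ≠ 0 := Nat.cast_ne_zero.mpr (Rat.den_ne_zero p)
  have hnum : (p.num : ℚ) = p * (p.den : ℚ) := by
    nth_rewrite 2 [← Rat.num_div_den p]
    rw [div_mul_cancel₀ _ hden]
  push_cast
  rw [hnum]
  ring


lemma key_rat (p q r s : ℚ) :
    ((p:ℂ) + q * I)^2 - ((p:ℂ) + q * I) * ((r:ℂ) + s * I) + ((r:ℂ) + s * I)^2 ≠ 1 + I := by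
  intro h
  -- extract real and imaginary parts
  have h' : ((p^2 - q^2 - (p*r - q*s) + (r^2 - s^2) : ℚ) : ℂ)
      + ((2*p*q - (p*s + q*r) + 2*r*s : ℚ) : ℂ) * I = 1 + I := by
    push_cast
    linear_combination h - ((q:ℂ)^2 - q*s + s^2) * Complex.I_sq
  have hre : p^2 - q^2 - (p*r - q*s) + (r^2 - s^2) = 1 := by
    have := congrArg Complex.re h'
    simp only [Complex.add_re, Complex.mul_re, Complex.ratCast_re, Complex.ratCast_im,
      Complex.I_re, Complex.I_im, Complex.one_re] at this
    norm_num at this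
    exact_mod_cast this
  have him : 2*p*q - (p*s + q*r) + 2*r*s = 1 := by
    have := congrArg Complex.im h'
    simp only [Complex.add_im, Complex.mul_im, Complex.ratCast_re, Complex.ratCast_im,
      Complex.I_re, Complex.I_im, Complex.one_im] at this
    norm_num at this
    exact_mod_cast this
  -- clear denominators
  set d : ℤ := (p.den : ℤ) * ((q.den : ℤ) * ((r.den : ℤ) * (s.den : ℤ))) with hd
  set P : ℤ := p.num * ((q.den : ℤ) * ((r.den : ℤ) * (s.den : ℤ))) with hPdef
  set Q : ℤ := q.num * ((p.den : ℤ) * ((r.den : ℤ) * (s.den : ℤ))) with hQdef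
  set R : ℤ := r.num * ((p.den : ℤ) * ((q.den : ℤ) * (s.den : ℤ))) with hRdef
  set S : ℤ := s.num * ((p.den : ℤ) * ((q.den : ℤ) * (r.den : ℤ))) with hSdef
  have hP : (P : ℚ) = p * d := by rw [hPdef, rat_num_mul, hd]; try (push_cast; ring)
  have hQ : (Q : ℚ) = q * d := by rw [hQdef, rat_num_mul, hd]; try (push_cast; ring)
  have hR : (R : ℚ) = r * d := by rw [hRdef, rat_num_mul, hd]; try (push_cast; ring)
  have hS : (S : ℚ) = s * d := by rw [hSdef, rat_num_mul, hd]; try (push_cast; ring)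
  have hre2 : P^2 - Q^2 - (P*R - Q*S) + (R^2 - S^2) = d^2 := by
    have : (P:ℚ)^2 - (Q:ℚ)^2 - ((P:ℚ)*(R:ℚ) - (Q:ℚ)*(S:ℚ)) + ((R:ℚ)^2 - (S:ℚ)^2)
        = (d:ℚ)^2 := by
      rw [hP, hQ, hR, hS]; linear_combination (d:ℚ)^2 * hre
    exact_mod_cast this
  have him2 : 2*P*Q - (P*S + Q*R) + 2*R*S = d^2 := by
    have : 2*(P:ℚ)*(Q:ℚ) - ((P:ℚ)*(S:ℚ) + (Q:ℚ)*(R:ℚ)) + 2*(R:ℚ)*(S:ℚ) = (d:ℚ)^2 := by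
      rw [hP, hQ, hR, hS]; linear_combination (d:ℚ)^2 * him
    exact_mod_cast this
  -- Gaussian integer equation
  have hg : (⟨P,Q⟩ : GaussianInt)^2 - ⟨P,Q⟩ * ⟨R,S⟩ + (⟨R,S⟩ : GaussianInt)^2
      = ⟨1,1⟩ * (⟨d,0⟩ : GaussianInt)^2 := by
    rw [pow_two, pow_two, pow_two]
    ext
    · simp only [Zsqrtd.re_add, Zsqrtd.re_sub, Zsqrtd.re_mul, Zsqrtd.im_mul]
      ring_nf
      ring_nf at hre2
      linarith [hre2]
    · simp only [Zsqrtd.im_add, Zsqrtd.im_sub, Zsqrtd.re_mul, Zsqrtd.im_mul]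
      ring_nf
      ring_nf at him2
      linarith [him2]
  have hC := descent _ _ _ _ rfl hg
  have hd0 : d ≠ 0 := by
    simp only [hd]
    have h1 : (0:ℤ) < (p.den:ℤ) := by exact_mod_cast p.den_pos
    have h2 : (0:ℤ) < (q.den:ℤ) := by exact_mod_cast q.den_pos
    have h3 : (0:ℤ) < (r.den:ℤ) := by exact_mod_cast r.den_pos
    have h4 : (0:ℤ) < (s.den:ℤ) := by exact_mod_cast s.den_pos
    positivity
  exact hd0 (by simpa using congrArg Zsqrtd.re hC)


noncomputable def QiSet : Subfield ℂ where
  carrier := {z | ∃ p q : ℚ, z = (p:ℂ) + q * I}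
  mul_mem' := by
    rintro _ _ ⟨p, q, rfl⟩ ⟨r, s, rfl⟩
    exact ⟨p*r - q*s, p*s + q*r, by push_cast; linear_combination ((q:ℂ)*s) * Complex.I_sq⟩
  one_mem' := ⟨1, 0, by norm_num⟩
  add_mem' := by
    rintro _ _ ⟨p, q, rfl⟩ ⟨r, s, rfl⟩
    exact ⟨p + r, q + s, by push_cast; ring⟩
  zero_mem' := ⟨0, 0, by norm_num⟩
  neg_mem' := by
    rintro _ ⟨p, q, rfl⟩
    exact ⟨-p, -q, by push_cast; ring⟩
  inv_mem' := by
    intro x hx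
    obtain ⟨p, q, rfl⟩ := hx
    by_cases h : ((p:ℂ) + q * I) = 0
    · rw [h, inv_zero]; exact ⟨0, 0, by norm_num⟩
    · have hpq : p^2 + q^2 ≠ 0 := by
        intro h0
        apply h
        have hp : p = 0 := by nlinarith [sq_nonneg p, sq_nonneg q]
        have hq : q = 0 := by nlinarith [sq_nonneg p, sq_nonneg q]
        rw [hp, hq]; norm_num
      refine ⟨p/(p^2+q^2), -q/(p^2+q^2), (eq_inv_of_mul_eq_one_left ?_).symm⟩
      have hpqC : ((p:ℂ))^2 + ((q:ℂ))^2 ≠ 0 := by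
        intro h0
        exact hpq (by exact_mod_cast h0)
      push_cast
      field_simp
      linear_combination (-(q:ℂ)^2) * Complex.I_sq

lemma mem_QI {z : ℂ} (hz : z ∈ QI) : ∃ p q : ℚ, z = (p:ℂ) + q * I := by
  have hle : QI ≤ Subfield.toIntermediateField QiSet
      (fun x => show ∃ p q : ℚ, (algebraMap ℚ ℂ) x = (p:ℂ) + q * I from
        ⟨x, 0, by rw [eq_ratCast (algebraMap ℚ ℂ) x]; norm_num⟩) := by
    rw [show QI = IntermediateField.adjoin ℚ {Complex.I} from rfl]
    rw [IntermediateField.adjoin_le_iff]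
    rintro x rfl
    exact show ∃ p q : ℚ, Complex.I = (p:ℂ) + q * I from ⟨0, 1, by norm_num⟩
  exact hle hz


lemma not_root_QI {z : ℂ} (hz : z ∈ QI) : z^2 + z + 1 ≠ 0 := by
  obtain ⟨p, q, rfl⟩ := mem_QI hz
  intro h
  apply no_sqrt_neg3 (2*p+1) (2*q)
  push_cast
  linear_combination 4 * h

lemma aniso {a b : ℂ} (ha : a ∈ QI) (hb : b ∈ QI) {ζ : ℂ} (hz : a + b * ζ ≠ 0) :
    a^2 - a*b + b^2 ≠ 0 := by
  intro h
  by_cases hb0 : b = 0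
  · rw [hb0] at h
    have ha0 : a = 0 := by
      have : a^2 = 0 := by linear_combination h
      exact pow_eq_zero_iff (by norm_num) |>.mp this
    exact hz (by rw [ha0, hb0]; ring)
  · have hu : ((2*a - b)/b)^2 = -3 := by
      field_simp
      linear_combination 4 * h
    have humem : (2*a - b)/b ∈ QI := by
      refine div_mem (sub_mem ?_ hb) hb
      exact mul_mem (by rw [show (2:ℂ) = 1 + 1 by norm_num]; exact add_mem (one_mem QI) (one_mem QI)) ha
    obtain ⟨p, q, hpq⟩ := mem_QI humem
    exact no_sqrt_neg3 p q (by rw [← hpq]; exact hu)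

noncomputable def LSet (ζ : ℂ) (hζ2 : ζ^2 + ζ + 1 = 0) : Subfield ℂ where
  carrier := {z | ∃ a b : ℂ, a ∈ QI ∧ b ∈ QI ∧ z = a + b * ζ}
  mul_mem' := by
    rintro _ _ ⟨a, b, ha, hb, rfl⟩ ⟨c, d, hc, hd, rfl⟩
    refine ⟨a*c - b*d, a*d + b*c - b*d, sub_mem (mul_mem ha hc) (mul_mem hb hd),
      sub_mem (add_mem (mul_mem ha hd) (mul_mem hb hc)) (mul_mem hb hd), ?_⟩
    linear_combination b * d * hζ2
  one_mem' := ⟨1, 0, one_mem _, zero_mem _, by ring⟩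
  add_mem' := by
    rintro _ _ ⟨a, b, ha, hb, rfl⟩ ⟨c, d, hc, hd, rfl⟩
    exact ⟨a + c, b + d, add_mem ha hc, add_mem hb hd, by ring⟩
  zero_mem' := ⟨0, 0, zero_mem _, zero_mem _, by ring⟩
  neg_mem' := by
    rintro _ ⟨a, b, ha, hb, rfl⟩
    exact ⟨-a, -b, neg_mem ha, neg_mem hb, by ring⟩
  inv_mem' := by
    intro x hx
    obtain ⟨a, b, ha, hb, rfl⟩ := hx
    by_cases h : a + b * ζ = 0
    · rw [h, inv_zero]
      exact ⟨0, 0, zero_mem _, zero_mem _, by ring⟩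
    · have hn : a^2 - a*b + b^2 ≠ 0 := aniso ha hb h
      refine ⟨(a - b)/(a^2 - a*b + b^2), (-b)/(a^2 - a*b + b^2),
        div_mem (sub_mem ha hb) (add_mem (sub_mem (pow_mem ha 2) (mul_mem ha hb)) (pow_mem hb 2)),
        div_mem (neg_mem hb) (add_mem (sub_mem (pow_mem ha 2) (mul_mem ha hb)) (pow_mem hb 2)),
        (eq_inv_of_mul_eq_one_left ?_).symm⟩
      have key : ((a - b) - b*ζ) * (a + b*ζ) = a^2 - a*b + b^2 := by
        linear_combination (-(b^2)) * hζ2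
      have harr : ((a - b)/(a^2 - a*b + b^2) + (-b)/(a^2 - a*b + b^2) * ζ)
          = ((a - b) - b*ζ)/(a^2 - a*b + b^2) := by ring
      rw [harr, div_mul_eq_mul_div, key, div_self hn]

lemma mem_L {ζ : ℂ} (hζ2 : ζ^2 + ζ + 1 = 0) {z : ℂ}
    (hz : z ∈ IntermediateField.adjoin ↥QI {ζ}) :
    ∃ a b : ℂ, a ∈ QI ∧ b ∈ QI ∧ z = a + b * ζ := by
  have hle : IntermediateField.adjoin ↥QI {ζ} ≤
      Subfield.toIntermediateField (LSet ζ hζ2)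
      (fun x => show ∃ a b : ℂ, a ∈ QI ∧ b ∈ QI ∧ (algebraMap ↥QI ℂ) x = a + b * ζ from
        ⟨x.1, 0, x.2, zero_mem _, by simp⟩) := by
    rw [IntermediateField.adjoin_le_iff]
    intro x hx
    simp only [Set.mem_singleton_iff] at hx
    subst hx
    exact show ∃ a b : ℂ, a ∈ QI ∧ b ∈ QI ∧ x = a + b * x from
      ⟨0, 1, zero_mem _, one_mem _, by ring⟩
  exact hle hz


end Stmt9

open Stmt9 Complex Polynomial

set_option maxHeartbeats 2000000
set_option synthInstance.maxHeartbeats 1000000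

theorem statement9 (ζ : ℂ) (hζ : IsPrimitiveRoot ζ 3)
    (L : IntermediateField ↥QI ℂ) (hL : L = IntermediateField.adjoin ↥QI {ζ}) :
    IsGalois ↥QI ↥L ∧ IsCyclic (↥L ≃ₐ[↥QI] ↥L) ∧ Module.finrank ↥QI ↥L = 2 ∧
      IsNonNormElement ↥QI ↥L onePlusI := by
  subst hL
  -- basic facts about ζ
  have hζ3 : ζ^3 = 1 := hζ.pow_eq_one
  have hζ1 : ζ ≠ 1 := hζ.ne_one (by norm_num)
  have hζ2 : ζ^2 + ζ + 1 = 0 := by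
    have h0 : (ζ - 1) * (ζ^2 + ζ + 1) = 0 := by linear_combination hζ3
    rcases mul_eq_zero.mp h0 with h | h
    · exact absurd (by linear_combination h) hζ1
    · exact h
  -- the minimal polynomial f = X² + X + 1
  set f : Polynomial ↥QI := X^2 + X + 1 with hf
  have hndeg : f.natDegree = 2 := by rw [hf]; compute_degree!
  have hfm : f.Monic := by rw [hf]; monicity!
  have haev : Polynomial.aeval ζ f = 0 := by
    rw [hf]
    simp only [map_add, map_pow, Polynomial.aeval_X, map_one]
    linear_combination hζ2
  have hirr : Irreducible f := by
    rw [Polynomial.irreducible_iff_roots_eq_zero_of_degree_le_three (by rw [hndeg])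
      (by rw [hndeg]; norm_num)]
    rw [Multiset.eq_zero_iff_forall_notMem]
    intro r hr
    rw [Polynomial.mem_roots hfm.ne_zero] at hr
    have hev : r^2 + r + 1 = 0 := by
      have := hr
      rw [Polynomial.IsRoot, hf] at this
      simpa using this
    have hevC : (r:ℂ)^2 + (r:ℂ) + 1 = 0 := by
      have := congrArg (algebraMap ↥QI ℂ) hev
      push_cast at this
      simpa using this
    exact not_root_QI r.2 hevC
  have hint : IsIntegral ↥QI ζ := ⟨f, hfm, by rw [← Polynomial.aeval_def]; exact haev⟩
  have hmin : minpoly ↥QI ζ = f := (minpoly.eq_of_irreducible_of_monic hirr haev hfm).symm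
  haveI hFD : FiniteDimensional ↥QI ↥(adjoin ↥QI {ζ}) :=
    IntermediateField.adjoin.finiteDimensional hint
  have hrank : Module.finrank ↥QI ↥(adjoin ↥QI {ζ}) = 2 := by
    rw [IntermediateField.adjoin.finrank hint, hmin, hndeg]
  -- the generator
  set z : ↥(adjoin ↥QI {ζ}) := IntermediateField.AdjoinSimple.gen ↥QI ζ with hzdef
  have hzval : (z : ℂ) = ζ := rfl
  have hz2 : z^2 + z + 1 = 0 := by
    apply Subtype.ext
    push_cast
    rw [hzval]
    exact hζ2
  -- splitting field
  have hfactor : f.map (algebraMap ↥QI ↥(adjoin ↥QI {ζ}))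
      = (X - C z) * (X - C (-1 - z)) := by
    have hCz : (C z)^2 + C z + 1 = (0 : Polynomial ↥(adjoin ↥QI {ζ})) := by
      have := congrArg Polynomial.C hz2
      simp only [map_add, map_pow, map_one, map_zero] at this
      exact this
    rw [hf]
    simp only [Polynomial.map_add, Polynomial.map_pow, Polynomial.map_X, Polynomial.map_one,
      map_sub, map_neg, map_one]
    linear_combination hCz
  haveI hsf : Polynomial.IsSplittingField ↥QI ↥(adjoin ↥QI {ζ}) f := by
    constructor
    · rw [hfactor]
      exact (Polynomial.Splits.X_sub_C _).mul (Polynomial.Splits.X_sub_C _)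
    · have h1 : Algebra.adjoin ↥QI {(IntermediateField.adjoin.powerBasis hint).gen} = ⊤ :=
        PowerBasis.adjoin_gen_eq_top _
      rw [IntermediateField.adjoin.powerBasis_gen] at h1
      rw [eq_top_iff, ← h1]
      apply Algebra.adjoin_mono
      intro t ht
      rw [Set.mem_singleton_iff] at ht
      subst ht
      rw [Polynomial.mem_rootSet]
      refine ⟨hfm.ne_zero, ?_⟩
      rw [hf]
      simp only [map_add, map_pow, Polynomial.aeval_X, map_one]
      linear_combination hz2
  haveI hnormal : Normal ↥QI ↥(adjoin ↥QI {ζ}) := Normal.of_isSplittingField f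
  haveI hgal : IsGalois ↥QI ↥(adjoin ↥QI {ζ}) := ⟨⟩
  haveI : Fact (Nat.Prime 2) := ⟨Nat.prime_two⟩
  refine ⟨hgal, ?_, hrank, ?_⟩
  · have hcard : Nat.card (↥(adjoin ↥QI {ζ}) ≃ₐ[↥QI] ↥(adjoin ↥QI {ζ})) = 2 := by
      rw [IsGalois.card_aut_eq_finrank, hrank]
    exact isCyclic_of_prime_card hcard
  · -- non-norm element
    have h1pI : ((onePlusI : ↥QI) : ℂ) = 1 + I := rfl
    have hne : onePlusI ≠ 0 := by
      intro h
      have h2 : (1 : ℂ) + I = 0 := congrArg Subtype.val h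
      have := congrArg Complex.re h2
      simp at this
    have hnotnorm : ∀ x : ↥(adjoin ↥QI {ζ}), Algebra.norm ↥QI x ≠ onePlusI := by
      classical
      intro x hx
      obtain ⟨a, b, ha, hb, hab⟩ := mem_L hζ2 x.2
      have hxrep : x = algebraMap ↥QI _ ⟨a, ha⟩ + algebraMap ↥QI _ ⟨b, hb⟩ * z := by
        apply Subtype.ext
        push_cast
        rw [hab]
        rfl
      have hcard2 : Fintype.card (↥(adjoin ↥QI {ζ}) →ₐ[↥QI] ℂ) = 2 := by
        rw [AlgHom.card, hrank]
      obtain ⟨σ, τ, hστ, hset⟩ := Nat.card_eq_two_iff.mp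
        (show Nat.card (↥(adjoin ↥QI {ζ}) →ₐ[↥QI] ℂ) = 2 by
          rw [Nat.card_eq_fintype_card]; exact hcard2)
      have huniv : (Finset.univ : Finset (↥(adjoin ↥QI {ζ}) →ₐ[↥QI] ℂ)) = {σ, τ} :=
        Finset.coe_injective (by rw [Finset.coe_univ, ← hset]; simp)
      have hprod := Algebra.norm_eq_prod_embeddings ↥QI ℂ x
      rw [hx] at hprod
      have hprod2 : (1 : ℂ) + I = σ x * τ x := by
        rw [show (1:ℂ) + I = algebraMap ↥QI ℂ onePlusI from rfl, hprod,
          show (Finset.univ : Finset (↥(adjoin ↥QI {ζ}) →ₐ[↥QI] ℂ)) = {σ, τ} from huniv,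
          Finset.prod_pair hστ]
      have himg : ∀ ρ : ↥(adjoin ↥QI {ζ}) →ₐ[↥QI] ℂ, ρ z = ζ ∨ ρ z = -1 - ζ := by
        intro ρ
        have h0 : (ρ z)^2 + ρ z + 1 = 0 := by
          have := congrArg ρ hz2
          simpa using this
        have hsp : (ρ z - ζ) * (ρ z - (-1 - ζ)) = 0 := by linear_combination h0 - hζ2
        rcases mul_eq_zero.mp hsp with h | h
        · exact Or.inl (sub_eq_zero.mp h)
        · exact Or.inr (sub_eq_zero.mp h)
      have hinj : σ z ≠ τ z := by
        intro h
        exact hστ (PowerBasis.algHom_ext (IntermediateField.adjoin.powerBasis hint)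
          (by rw [IntermediateField.adjoin.powerBasis_gen]; exact h))
      have hρval : ∀ ρ : ↥(adjoin ↥QI {ζ}) →ₐ[↥QI] ℂ, ρ x = a + b * (ρ z) := by
        intro ρ
        rw [hxrep]
        simp only [map_add, map_mul, AlgHom.commutes]
        rfl
      have hfinal : (1:ℂ) + I = (a + b*ζ) * (a + b*(-1-ζ)) := by
        rcases himg σ with h1 | h1 <;> rcases himg τ with h2 | h2
        · exact absurd (h1.trans h2.symm) hinj
        · rw [hprod2, hρval σ, hρval τ, h1, h2]
        · rw [hprod2, hρval σ, hρval τ, h1, h2]; ring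
        · exact absurd (h1.trans h2.symm) hinj
      have hquad : ((a:ℂ))^2 - a*b + b^2 = 1 + I := by linear_combination -hfinal + b^2 * hζ2
      obtain ⟨p, q, rfl⟩ := mem_QI ha
      obtain ⟨r, s, rfl⟩ := mem_QI hb
      exact key_rat p q r s hquad
    refine ⟨hne, ?_⟩
    rw [hrank]
    apply orderOf_eq_prime
    · rw [← QuotientGroup.mk_pow, QuotientGroup.eq_one_iff]
      refine ⟨Units.mk0 (algebraMap ↥QI ↥(adjoin ↥QI {ζ}) onePlusI)
        ((_root_.map_ne_zero _).mpr hne), ?_⟩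
      apply Units.ext
      have : Algebra.norm ↥QI (algebraMap ↥QI ↥(adjoin ↥QI {ζ}) onePlusI)
          = onePlusI ^ 2 := by
        rw [Algebra.norm_algebraMap, hrank]
      simpa using this
    · intro h1
      rw [QuotientGroup.eq_one_iff] at h1
      obtain ⟨y, hy⟩ := h1
      apply hnotnorm (y : ↥(adjoin ↥QI {ζ}))
      have := congrArg Units.val hy
      simpa using this
end
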